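/- arXiv:1609.08172 — 3 statements merged into one kernel-verified Lean document; each statement's English description precedes it below -/
import Mathlib

section
/- Let n ≥ 1, d = 2^n, and define α_+(ψ) := tr(P_{n,4}·(|ψ⟩⟨ψ|)^{⊗4}) and ε(ψ) := (d(d+3)/4)·α_+(ψ) − 1 for unit vectors ψ ∈ ℂ^d. Then for all unit vectors ψ, φ ∈ ℂ^d: |α_+(ψ) − α_+(φ)| ≤ (5.4/d)·‖ψ − φ‖₂ and |ε(ψ) − ε(φ)| ≤ (5.4(d+3)/4)·‖ψ − φ‖₂; that is, α_+ and ε are Lipschitz continuous on the unit sphere with Lipschitz constants 5.4/d and 5.4(d+3)/4 respectively. -/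
open scoped BigOperators

noncomputable section

/-- `t`-fold tensor (Kronecker) power of a matrix, acting on `(ℂ^α)^{⊗t}`. -/
def tpow {α : Type*} [Fintype α] (M : Matrix α α ℂ) (t : ℕ) :
    Matrix (Fin t → α) (Fin t → α) ℂ :=
  Matrix.of fun x y => ∏ i, M (x i) (y i)

/-- The rank-one operator `|ψ⟩⟨ψ|`. -/
def rankOne {α : Type*} (ψ : α → ℂ) : Matrix α α ℂ :=
  Matrix.of fun i j => ψ i * (starRingEnd ℂ) (ψ j)

/-- The operator `U_σ` permuting the `t` tensor factors of `(ℂ^α)^{⊗t}`. -/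
def permOp (α : Type*) [DecidableEq α] {t : ℕ} (σ : Equiv.Perm (Fin t)) :
    Matrix (Fin t → α) (Fin t → α) ℂ :=
  Matrix.of fun x y => if (fun k => x (σ k)) = y then 1 else 0

/-- The projector `P_[t]` onto the symmetric subspace `Sym_t(ℂ^α)`. -/
def symProj (α : Type*) [DecidableEq α] (t : ℕ) :
    Matrix (Fin t → α) (Fin t → α) ℂ :=
  (t.factorial : ℂ)⁻¹ • ∑ σ : Equiv.Perm (Fin t), permOp α σ

/-- Single-qubit Pauli matrices labelled by `𝔽₂²`:
`σ_{(0,0)} = I`, `σ_{(0,1)} = X`, `σ_{(1,0)} = Z`, `σ_{(1,1)} = Y`. -/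
def pauli (a : ZMod 2 × ZMod 2) : Matrix (ZMod 2) (ZMod 2) ℂ :=
  Matrix.of fun x y =>
    if a = (0, 0) then (if x = y then 1 else 0)
    else if a = (0, 1) then (if x = y + 1 then 1 else 0)
    else if a = (1, 0) then (if x = y then (if x = 0 then 1 else -1) else 0)
    else (if x = y + 1 then (if x = 0 then -Complex.I else Complex.I) else 0)

/-- The Pauli operator `W_a`, `a ∈ 𝔽₂^{2n}`, on qubits labelled by a finite type `Q`. -/
def PauliW {Q : Type*} [Fintype Q] (a : Q → ZMod 2 × ZMod 2) :
    Matrix (Q → ZMod 2) (Q → ZMod 2) ℂ :=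
  Matrix.of fun x y => ∏ i, pauli (a i) (x i) (y i)

/-- The stabilizer projector `P_{n,k} = 2^{-2n}·Σ_{a∈𝔽₂^{2n}} W_a^{⊗k}`. -/
def stabProj (n k : ℕ) :
    Matrix (Fin k → (Fin n → ZMod 2)) (Fin k → (Fin n → ZMod 2)) ℂ :=
  ((2 : ℂ) ^ (2 * n))⁻¹ • ∑ a : Fin n → ZMod 2 × ZMod 2, tpow (PauliW a) k

/-- A single-qubit gate `G` applied to qubit `i` of `n` qubits (identity elsewhere). -/
def embedGate (n : ℕ) (G : Matrix (ZMod 2) (ZMod 2) ℂ) (i : Fin n) :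
    Matrix (Fin n → ZMod 2) (Fin n → ZMod 2) ℂ :=
  Matrix.of fun x y =>
    G (x i) (y i) * ∏ k ∈ Finset.univ.erase i, (if x k = y k then (1 : ℂ) else 0)

/-- The Hadamard gate `((1+i)/2)·[[1,1],[1,−1]]`. -/
def hGate : Matrix (ZMod 2) (ZMod 2) ℂ :=
  Matrix.of fun x y => (1 + Complex.I) / 2 * (if x = 1 ∧ y = 1 then -1 else 1)

/-- The phase gate `diag(1, −i)`. -/
def sGate : Matrix (ZMod 2) (ZMod 2) ℂ :=
  Matrix.of fun x y => if x = y then (if x = 0 then 1 else -Complex.I) else 0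

/-- The CNOT gate with control qubit `i` and target qubit `j`. -/
def cnotGate (n : ℕ) (i j : Fin n) :
    Matrix (Fin n → ZMod 2) (Fin n → ZMod 2) ℂ :=
  Matrix.of fun x y =>
    if x i = y i ∧ x j = y i + y j ∧ ∀ k, k ≠ i → k ≠ j → x k = y k then 1 else 0

/-- Generators of the `n`-qubit Clifford group: Hadamard and phase gates on each qubit,
CNOT gates on each ordered pair of distinct qubits. -/
def cliffordGens (n : ℕ) : Set (Matrix (Fin n → ZMod 2) (Fin n → ZMod 2) ℂ) :=
  (⋃ i : Fin n, {embedGate n hGate i}) ∪ (⋃ i : Fin n, {embedGate n sGate i}) ∪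
    ⋃ (i : Fin n) (j : Fin n) (_ : i ≠ j), {cnotGate n i j}

/-- The `n`-qubit Clifford group: the subgroup of the unitary group `U(2^n)` generated by
the Hadamard and phase gates on each qubit together with the CNOT gates. -/
def CliffordGroup (n : ℕ) : Subgroup (Matrix.unitaryGroup (Fin n → ZMod 2) ℂ) :=
  Subgroup.closure
    {U : Matrix.unitaryGroup (Fin n → ZMod 2) ℂ |
      (U : Matrix (Fin n → ZMod 2) (Fin n → ZMod 2) ℂ) ∈ cliffordGens n}

/-- `α_+(ψ) = tr(P_{n,4}·(|ψ⟩⟨ψ|)^{⊗4})`. -/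
def alphaPlus (n : ℕ) (ψ : (Fin n → ZMod 2) → ℂ) : ℂ :=
  Matrix.trace (stabProj n 4 * tpow (rankOne ψ) 4)

set_option maxHeartbeats 1000000 in
-- real backend lemma
lemma key_real {ι : Type*} [Fintype ι] (x y : ι → ℝ) (d D : ℝ) (hd : 0 ≤ d) (hD : 0 ≤ D)
    (h1 : ∑ a, x a^2 = d) (h2 : ∑ a, y a^2 = d)
    (h3 : ∑ a, (x a - y a)^2 ≤ 2*d*D^2)
    (h4 : ∀ a, |x a| ≤ 1) (h5 : ∀ a, |y a| ≤ 1)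
    (h6 : ∀ a, |x a - y a| ≤ 2*D) :
    |∑ a, (x a^4 - y a^4)| ≤ 5.4 * d * D := by
  have hx4 : ∑ a, (x a)^4 ≤ d := by
    rw [← h1]
    refine Finset.sum_le_sum fun a _ => ?_
    have h1a : x a^2 ≤ 1 := by
      have := abs_le.mp (h4 a); nlinarith
    nlinarith [mul_nonneg (sq_nonneg (x a)) (sub_nonneg.mpr h1a)]
  have hy4 : ∑ a, (y a)^4 ≤ d := by
    rw [← h2]
    refine Finset.sum_le_sum fun a _ => ?_
    have h1a : y a^2 ≤ 1 := by
      have := abs_le.mp (h5 a); nlinarith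
    nlinarith [mul_nonneg (sq_nonneg (y a)) (sub_nonneg.mpr h1a)]
  by_cases hc : (3:ℝ)/8 ≤ D
  · have habs : |∑ a, (x a^4 - y a^4)| ≤ 2*d := by
      rw [abs_le]
      constructor
      · have : -(2*d) ≤ 0 - ∑ a, (y a)^4 := by
          have : 0 ≤ ∑ a, (y a)^4 := Finset.sum_nonneg fun a _ => by positivity
          linarith
        calc -(2*d) ≤ 0 - ∑ a, (y a)^4 := this
        _ ≤ ∑ a, (x a)^4 - ∑ a, (y a)^4 := by
            have : (0:ℝ) ≤ ∑ a, (x a)^4 := Finset.sum_nonneg fun a _ => by positivity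
            linarith
        _ = ∑ a, (x a^4 - y a^4) := (Finset.sum_sub_distrib _ _).symm
      · calc ∑ a, (x a^4 - y a^4) = ∑ a, (x a)^4 - ∑ a, (y a)^4 := Finset.sum_sub_distrib _ _
        _ ≤ d - 0 := by
            have : (0:ℝ) ≤ ∑ a, (y a)^4 := Finset.sum_nonneg fun a _ => by positivity
            linarith
        _ ≤ 2*d := by linarith
    calc |∑ a, (x a^4 - y a^4)| ≤ 2*d := habs
    _ ≤ 5.4 * d * D := by nlinarith
  · push_neg at hc
    set t := fun a => x a - y a with ht
    set u := fun a => x a + y a with hu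
    have htu : ∑ a, t a * u a = 0 := by
      have : ∀ a, t a * u a = x a^2 - y a^2 := fun a => by simp [ht, hu]; ring
      rw [Finset.sum_congr rfl fun a _ => this a, Finset.sum_sub_distrib, h1, h2]
      ring
    have hiden : ∀ a, x a^4 - y a^4 =
        (1/2) * (t a * (u a * (u a^2 - 2))) + (1/2) * (t a^3 * u a) + t a * u a := by
      intro a; simp [ht, hu]; ring
    have hsplit : ∑ a, (x a^4 - y a^4) =
        (1/2) * (∑ a, t a * (u a * (u a^2 - 2))) + (1/2) * (∑ a, t a^3 * u a) := by
      rw [Finset.sum_congr rfl fun a _ => hiden a]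
      rw [Finset.sum_add_distrib, Finset.sum_add_distrib, htu, ← Finset.mul_sum, ← Finset.mul_sum]
      ring
    have hu2 : ∀ a, u a^2 ≤ 4 := by
      intro a
      have h4a := h4 a; have h5a := h5 a
      have : |u a| ≤ 2 := by
        calc |u a| ≤ |x a| + |y a| := abs_add_le _ _
        _ ≤ 2 := by linarith
      nlinarith [abs_nonneg (u a), sq_abs (u a)]
    have hsumu2 : ∑ a, u a^2 ≤ 4*d := by
      have : ∀ a, u a^2 ≤ 2*x a^2 + 2*y a^2 := fun a => by simp [hu]; nlinarith [sq_nonneg (x a - y a)]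
      calc ∑ a, u a^2 ≤ ∑ a, (2*x a^2 + 2*y a^2) := Finset.sum_le_sum fun a _ => this a
      _ = 4*d := by rw [Finset.sum_add_distrib, ← Finset.mul_sum, ← Finset.mul_sum, h1, h2]; ring
    have hA : |∑ a, t a * (u a * (u a^2 - 2))| ≤ Real.sqrt 32 * d * D := by
      have hcs := Finset.sum_mul_sq_le_sq_mul_sq Finset.univ t (fun a => u a * (u a^2 - 2))
      have hg : ∑ a, (u a * (u a^2 - 2))^2 ≤ 16*d := by
        have : ∀ a, (u a * (u a^2 - 2))^2 ≤ 4 * u a^2 := by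
          intro a
          have hva := hu2 a
          nlinarith [sq_nonneg (u a), mul_nonneg (sq_nonneg (u a^2)) (sub_nonneg.mpr hva),
            mul_nonneg (sq_nonneg (u a)) (sub_nonneg.mpr hva)]
        calc ∑ a, (u a * (u a^2 - 2))^2 ≤ ∑ a, 4 * u a^2 := Finset.sum_le_sum fun a _ => this a
        _ = 4 * ∑ a, u a^2 := by rw [Finset.mul_sum]
        _ ≤ 16*d := by linarith
      have hsq : (∑ a, t a * (u a * (u a^2 - 2)))^2 ≤ 32 * d^2 * D^2 := by
        calc (∑ a, t a * (u a * (u a^2 - 2)))^2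
            ≤ (∑ a, t a^2) * ∑ a, (u a * (u a^2 - 2))^2 := hcs
        _ ≤ (2*d*D^2) * (16*d) := by
            have ht2 : (0:ℝ) ≤ ∑ a, t a ^ 2 := Finset.sum_nonneg fun a _ => sq_nonneg _
            have hg0 : (0:ℝ) ≤ ∑ a, (u a * (u a^2 - 2))^2 := Finset.sum_nonneg fun a _ => sq_nonneg _
            nlinarith [h3]
        _ = 32 * d^2 * D^2 := by ring
      have h0 : (0:ℝ) ≤ Real.sqrt 32 * d * D := by positivity
      rw [abs_le]
      constructor
      · nlinarith [Real.sq_sqrt (by norm_num : (32:ℝ) ≥ 0), Real.sqrt_nonneg 32, hsq]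
      · nlinarith [Real.sq_sqrt (by norm_num : (32:ℝ) ≥ 0), Real.sqrt_nonneg 32, hsq]
    have hB : |∑ a, t a^3 * u a| ≤ 8 * d * D^3 := by
      have hterm : ∀ a, |t a^3 * u a| ≤ (2*D) * 2 * t a^2 := by
        intro a
        have h6a := h6 a
        have hua : |u a| ≤ 2 := by
          have h4a := h4 a; have h5a := h5 a
          calc |u a| ≤ |x a| + |y a| := abs_add_le _ _
          _ ≤ 2 := by linarith
        have heq : |t a^3 * u a| = |t a|^3 * |u a| := by
          rw [abs_mul, abs_pow]
        rw [heq]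
        have h1' : |t a|^3 ≤ (2*D) * t a^2 := by
          have h3e : |t a|^3 = |t a| * |t a|^2 := by ring
          rw [h3e, sq_abs]
          exact mul_le_mul_of_nonneg_right h6a (sq_nonneg _)
        calc |t a|^3 * |u a| ≤ |t a|^3 * 2 :=
              mul_le_mul_of_nonneg_left hua (pow_nonneg (abs_nonneg _) 3)
        _ ≤ ((2*D) * t a^2) * 2 := mul_le_mul_of_nonneg_right h1' (by norm_num)
        _ = (2*D) * 2 * t a^2 := by ring
      calc |∑ a, t a^3 * u a| ≤ ∑ a, |t a^3 * u a| := Finset.abs_sum_le_sum_abs _ _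
      _ ≤ ∑ a, (2*D) * 2 * t a^2 := Finset.sum_le_sum fun a _ => hterm a
      _ = ∑ a, 4*D * t a^2 := Finset.sum_congr rfl fun a _ => by ring
      _ = 4*D * ∑ a, t a^2 := (Finset.mul_sum _ _ _).symm
      _ ≤ 4*D * (2*d*D^2) := by
          have := Finset.sum_nonneg (fun a (_ : a ∈ Finset.univ) => sq_nonneg (t a))
          nlinarith [h3]
      _ = 8 * d * D^3 := by ring
    have hsqrt32 : Real.sqrt 32 ≤ 5.66 := by
      calc Real.sqrt 32 ≤ Real.sqrt (5.66^2) := Real.sqrt_le_sqrt (by norm_num)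
      _ = 5.66 := Real.sqrt_sq (by norm_num)
    have hdD : (0:ℝ) ≤ d * D := mul_nonneg hd hD
    have hA' : |∑ a, t a * (u a * (u a^2 - 2))| ≤ 5.66 * d * D := by
      calc |∑ a, t a * (u a * (u a^2 - 2))| ≤ Real.sqrt 32 * d * D := hA
      _ ≤ 5.66 * d * D := by nlinarith [hdD]
    have hD2 : D^2 ≤ (3/8)^2 := by nlinarith
    have hB' : |∑ a, t a^3 * u a| ≤ (9/8) * d * D := by
      calc |∑ a, t a^3 * u a| ≤ 8 * d * D^3 := hB
      _ ≤ (9/8) * d * D := by nlinarith [mul_nonneg hd hD]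
    rw [hsplit]
    calc |1/2 * (∑ a, t a * (u a * (u a^2 - 2))) + 1/2 * (∑ a, t a^3 * u a)|
        ≤ |1/2 * (∑ a, t a * (u a * (u a^2 - 2)))| + |1/2 * (∑ a, t a^3 * u a)| := abs_add_le _ _
    _ = 1/2 * |∑ a, t a * (u a * (u a^2 - 2))| + 1/2 * |∑ a, t a^3 * u a| := by
        rw [abs_mul, abs_mul, abs_of_pos (show (0:ℝ) < 1/2 by norm_num)]
    _ ≤ 1/2 * (5.66 * d * D) + 1/2 * ((9/8) * d * D) := by
        have := abs_nonneg (∑ a, t a * (u a * (u a^2 - 2)))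
        linarith [hA', hB']
    _ ≤ 5.4 * d * D := by nlinarith [hdD]

variable {n : ℕ}

lemma zmod2_sum {M : Type*} [AddCommMonoid M] (f : ZMod 2 → M) : ∑ z, f z = f 0 + f 1 := by
  rw [show (Finset.univ : Finset (ZMod 2)) = {0, 1} from by decide,
    Finset.sum_insert (by decide), Finset.sum_singleton]

lemma zmod2_cases (z : ZMod 2) : z = 0 ∨ z = 1 := by
  revert z; decide

lemma zmod2_prod_sum (f : ZMod 2 × ZMod 2 → ℂ) :
    ∑ c, f c = f (0,0) + f (0,1) + f (1,0) + f (1,1) := by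
  rw [Fintype.sum_prod_type, zmod2_sum, zmod2_sum, zmod2_sum]; ring

-- one-qubit orthogonality
lemma pauli_orth1 (p q r t : ZMod 2) :
    ∑ c : ZMod 2 × ZMod 2, pauli c p q * pauli c r t =
      if p = t ∧ q = r then 2 else 0 := by
  rw [zmod2_prod_sum]
  rcases zmod2_cases p with rfl | rfl <;> rcases zmod2_cases q with rfl | rfl <;> rcases zmod2_cases r with rfl | rfl <;> rcases zmod2_cases t with rfl | rfl <;>
    simp [pauli, Matrix.of_apply, Prod.ext_iff, show (1:ZMod 2)+1 = 0 by decide, show (1:ZMod 2) ≠ 0 by decide, show (0:ZMod 2) ≠ 1 by decide, Complex.ext_iff] <;> norm_num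

lemma pauli_herm1 (c : ZMod 2 × ZMod 2) (p q : ZMod 2) :
    (starRingEnd ℂ) (pauli c p q) = pauli c q p := by
  obtain ⟨c1, c2⟩ := c
  rcases zmod2_cases c1 with rfl | rfl <;> rcases zmod2_cases c2 with rfl | rfl <;> rcases zmod2_cases p with rfl | rfl <;> rcases zmod2_cases q with rfl | rfl <;>
    simp [pauli, Matrix.of_apply, Prod.ext_iff, show (1:ZMod 2)+1 = 0 by decide,
      show (1:ZMod 2) ≠ 0 by decide, show (0:ZMod 2) ≠ 1 by decide, Complex.ext_iff] <;>
    norm_num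

lemma pauli_unit1 (c : ZMod 2 × ZMod 2) (p q : ZMod 2) :
    ∑ u, (starRingEnd ℂ) (pauli c u p) * pauli c u q = if p = q then 1 else 0 := by
  rw [zmod2_sum]
  obtain ⟨c1, c2⟩ := c
  rcases zmod2_cases c1 with rfl | rfl <;> rcases zmod2_cases c2 with rfl | rfl <;> rcases zmod2_cases p with rfl | rfl <;> rcases zmod2_cases q with rfl | rfl <;>
    simp [pauli, Matrix.of_apply, Prod.ext_iff, show (1:ZMod 2)+1 = 0 by decide,
      show (1:ZMod 2) ≠ 0 by decide, show (0:ZMod 2) ≠ 1 by decide, Complex.ext_iff] <;>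
    norm_num

lemma prod_ite_delta {x y : Fin n → ZMod 2} :
    (∏ i, if x i = y i then (1:ℂ) else 0) = if x = y then 1 else 0 := by
  by_cases h : x = y
  · subst h; simp
  · rw [if_neg h]
    obtain ⟨i, hi⟩ := Function.ne_iff.mp h
    exact Finset.prod_eq_zero (Finset.mem_univ i) (if_neg hi)

lemma prod_ite_delta2 {x y z w : Fin n → ZMod 2} :
    (∏ i, if x i = w i ∧ y i = z i then (2:ℂ) else 0) =
      if x = w ∧ y = z then 2^n else 0 := by
  by_cases h : x = w ∧ y = z
  · obtain ⟨h1, h2⟩ := h; subst h1; subst h2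
    simp [Finset.prod_const, Finset.card_univ]
  · rw [if_neg h]
    rw [not_and_or] at h
    rcases h with h | h <;>
    · obtain ⟨i, hi⟩ := Function.ne_iff.mp h
      refine Finset.prod_eq_zero (Finset.mem_univ i) (if_neg ?_)
      tauto

lemma pauliW_orth (x y z w : Fin n → ZMod 2) :
    ∑ a : Fin n → ZMod 2 × ZMod 2, PauliW a x y * PauliW a z w =
      if x = w ∧ y = z then (2:ℂ)^n else 0 := by
  have : ∀ a : Fin n → ZMod 2 × ZMod 2, PauliW a x y * PauliW a z w =
      ∏ i, (pauli (a i) (x i) (y i) * pauli (a i) (z i) (w i)) := by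
    intro a; rw [Finset.prod_mul_distrib]; rfl
  simp_rw [this]
  have key := Finset.prod_univ_sum (fun _ : Fin n => (Finset.univ : Finset (ZMod 2 × ZMod 2)))
    (fun i c => pauli c (x i) (y i) * pauli c (z i) (w i))
  rw [Fintype.piFinset_univ] at key
  rw [← key]
  simp_rw [pauli_orth1]
  exact prod_ite_delta2

lemma pauliW_herm (a : Fin n → ZMod 2 × ZMod 2) (x y : Fin n → ZMod 2) :
    (starRingEnd ℂ) (PauliW a x y) = PauliW a y x := by
  unfold PauliW
  simp only [Matrix.of_apply, map_prod, pauli_herm1]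

lemma pauliW_unit (a : Fin n → ZMod 2 × ZMod 2) (x y : Fin n → ZMod 2) :
    ∑ z, (starRingEnd ℂ) (PauliW a z x) * PauliW a z y = if x = y then 1 else 0 := by
  have : ∀ z : Fin n → ZMod 2, (starRingEnd ℂ) (PauliW a z x) * PauliW a z y =
      ∏ i, ((starRingEnd ℂ) (pauli (a i) (z i) (x i)) * pauli (a i) (z i) (y i)) := by
    intro z
    unfold PauliW
    simp only [Matrix.of_apply, map_prod, Finset.prod_mul_distrib]
  simp_rw [this]
  have key := Finset.prod_univ_sum (fun _ : Fin n => (Finset.univ : Finset (ZMod 2)))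
    (fun i u => (starRingEnd ℂ) (pauli (a i) u (x i)) * pauli (a i) u (y i))
  rw [Fintype.piFinset_univ] at key
  rw [← key]
  simp_rw [pauli_unit1]
  exact prod_ite_delta

lemma trace_mul_double {β : Type*} [Fintype β] (A B : Matrix β β ℂ) :
    Matrix.trace (A * B) = ∑ x, ∑ y, A x y * B y x := by
  simp [Matrix.trace, Matrix.mul_apply, Matrix.diag]

lemma trace_tpow_mul {β : Type*} [Fintype β] [DecidableEq β] (M N : Matrix β β ℂ) (k : ℕ) :
    Matrix.trace (tpow M k * tpow N k) = (Matrix.trace (M * N))^k := by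
  rw [trace_mul_double, trace_mul_double]
  have step1 : ∀ x : Fin k → β, ∑ y : Fin k → β, tpow M k x y * tpow N k y x =
      ∏ i, (∑ v, M (x i) v * N v (x i)) := by
    intro x
    have key := Finset.prod_univ_sum (fun _ : Fin k => (Finset.univ : Finset β))
      (fun i v => M (x i) v * N v (x i))
    rw [Fintype.piFinset_univ] at key
    rw [key]
    refine Finset.sum_congr rfl fun y _ => ?_
    unfold tpow
    simp only [Matrix.of_apply]
    rw [← Finset.prod_mul_distrib]
  simp_rw [step1]
  have key2 := Finset.prod_univ_sum (fun _ : Fin k => (Finset.univ : Finset β))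
    (fun (_ : Fin k) (u : β) => ∑ v, M u v * N v u)
  rw [Fintype.piFinset_univ] at key2
  rw [← key2, Finset.prod_const, Finset.card_univ, Fintype.card_fin]

def pf (n : ℕ) (ψ : (Fin n → ZMod 2) → ℂ) (a : Fin n → ZMod 2 × ZMod 2) : ℂ :=
  Matrix.trace (PauliW a * rankOne ψ)

lemma alphaPlus_eq (ψ : (Fin n → ZMod 2) → ℂ) :
    alphaPlus n ψ = ((2:ℂ)^(2*n))⁻¹ * ∑ a, (pf n ψ a)^4 := by
  unfold alphaPlus stabProj
  rw [Matrix.smul_mul, Matrix.trace_smul, Finset.sum_mul, Matrix.trace_sum]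
  simp_rw [trace_tpow_mul]
  unfold pf
  simp [smul_eq_mul]

lemma pf_prod_expand (ψ : (Fin n → ZMod 2) → ℂ) (a : Fin n → ZMod 2 × ZMod 2) :
    pf n ψ a = ∑ p : (Fin n → ZMod 2) × (Fin n → ZMod 2),
      PauliW a p.1 p.2 * (ψ p.2 * (starRingEnd ℂ) (ψ p.1)) := by
  unfold pf
  rw [trace_mul_double, Fintype.sum_prod_type]
  rfl

lemma pf_mul_sum (ψ φ : (Fin n → ZMod 2) → ℂ) :
    ∑ a, pf n ψ a * pf n φ a =
      (2:ℂ)^n * ((∑ x, ψ x * (starRingEnd ℂ) (φ x)) * (∑ x, (starRingEnd ℂ) (ψ x) * φ x)) := by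
  classical
  have e1 : ∀ a : Fin n → ZMod 2 × ZMod 2, pf n ψ a * pf n φ a =
      ∑ p : (Fin n → ZMod 2) × (Fin n → ZMod 2), ∑ q : (Fin n → ZMod 2) × (Fin n → ZMod 2),
        (PauliW a p.1 p.2 * PauliW a q.1 q.2) *
          ((ψ p.2 * (starRingEnd ℂ) (ψ p.1)) * (φ q.2 * (starRingEnd ℂ) (φ q.1))) := by
    intro a
    rw [pf_prod_expand, pf_prod_expand, Finset.sum_mul_sum]
    refine Finset.sum_congr rfl fun p _ => Finset.sum_congr rfl fun q _ => by ring
  rw [Finset.sum_congr rfl fun a _ => e1 a]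
  rw [Finset.sum_comm]
  have e2 : ∀ p : (Fin n → ZMod 2) × (Fin n → ZMod 2), ∑ a : Fin n → ZMod 2 × ZMod 2, ∑ q : (Fin n → ZMod 2) × (Fin n → ZMod 2),
      (PauliW a p.1 p.2 * PauliW a q.1 q.2) *
        ((ψ p.2 * (starRingEnd ℂ) (ψ p.1)) * (φ q.2 * (starRingEnd ℂ) (φ q.1))) =
      (2:ℂ)^n * ((ψ p.2 * (starRingEnd ℂ) (ψ p.1)) * (φ p.1 * (starRingEnd ℂ) (φ p.2))) := by
    intro p
    rw [Finset.sum_comm]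
    have e3 : ∀ q : (Fin n → ZMod 2) × (Fin n → ZMod 2), ∑ a : Fin n → ZMod 2 × ZMod 2,
        (PauliW a p.1 p.2 * PauliW a q.1 q.2) *
          ((ψ p.2 * (starRingEnd ℂ) (ψ p.1)) * (φ q.2 * (starRingEnd ℂ) (φ q.1))) =
        (if (p.2, p.1) = q then (2:ℂ)^n else 0) *
          ((ψ p.2 * (starRingEnd ℂ) (ψ p.1)) * (φ q.2 * (starRingEnd ℂ) (φ q.1))) := by
      intro q
      rw [← Finset.sum_mul, pauliW_orth]
      congr 1
      have : (p.1 = q.2 ∧ p.2 = q.1) ↔ ((p.2, p.1) = q) := by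
        constructor
        · rintro ⟨h1, h2⟩; ext <;> simp [h1.symm, h2.symm]
        · rintro rfl; exact ⟨rfl, rfl⟩
      simp only [this]
    rw [Finset.sum_congr rfl fun q _ => e3 q]
    simp only [ite_mul, zero_mul]
    rw [Finset.sum_ite_eq]
    simp
  rw [Finset.sum_congr rfl fun p _ => e2 p]
  rw [← Finset.mul_sum]
  congr 1
  rw [Finset.sum_mul_sum (Finset.univ) (Finset.univ)
    (fun x : Fin n → ZMod 2 => ψ x * (starRingEnd ℂ) (φ x)) (fun x : Fin n → ZMod 2 => (starRingEnd ℂ) (ψ x) * φ x)]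
  rw [Fintype.sum_prod_type, Finset.sum_comm]
  refine Finset.sum_congr rfl fun x _ => Finset.sum_congr rfl fun y _ => by ring

-- complex Cauchy-Schwarz for finite sums
lemma cs_complex {ι : Type*} [Fintype ι] (f g : ι → ℂ) :
    ‖∑ x, (starRingEnd ℂ) (f x) * g x‖ ≤
      Real.sqrt (∑ x, Complex.normSq (f x)) * Real.sqrt (∑ x, Complex.normSq (g x)) := by
  have h1 : ‖∑ x, (starRingEnd ℂ) (f x) * g x‖ ≤
      ∑ x, ‖f x‖ * ‖g x‖ := by
    calc ‖∑ x, (starRingEnd ℂ) (f x) * g x‖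
        ≤ ∑ x, ‖(starRingEnd ℂ) (f x) * g x‖ :=
          norm_sum_le _ _
    _ = ∑ x, ‖f x‖ * ‖g x‖ := by
        refine Finset.sum_congr rfl fun x _ => ?_
        rw [norm_mul, Complex.norm_conj]
  have h2 : (∑ x, ‖f x‖ * ‖g x‖)^2 ≤
      (∑ x, Complex.normSq (f x)) * (∑ x, Complex.normSq (g x)) := by
    have := Finset.sum_mul_sq_le_sq_mul_sq Finset.univ (fun x => ‖f x‖)
      (fun x => ‖g x‖)
    simpa [Complex.sq_norm] using this
  have hnn : (0:ℝ) ≤ ∑ x, ‖f x‖ * ‖g x‖ :=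
    Finset.sum_nonneg fun x _ => mul_nonneg (norm_nonneg _) (norm_nonneg _)
  have h3 : ∑ x, ‖f x‖ * ‖g x‖ ≤
      Real.sqrt (∑ x, Complex.normSq (f x)) * Real.sqrt (∑ x, Complex.normSq (g x)) := by
    rw [← Real.sqrt_mul_self hnn, ← Real.sqrt_mul (Finset.sum_nonneg fun x _ => Complex.normSq_nonneg _)]
    exact Real.sqrt_le_sqrt (by nlinarith)
  linarith

-- isometry of PauliW on inner products
lemma pauliW_inner (a : Fin n → ZMod 2 × ZMod 2) (f g : (Fin n → ZMod 2) → ℂ) :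
    ∑ x, (starRingEnd ℂ) (∑ y, PauliW a x y * f y) * (∑ y, PauliW a x y * g y) =
      ∑ x, (starRingEnd ℂ) (f x) * g x := by
  classical
  have e1 : ∀ x : Fin n → ZMod 2,
      (starRingEnd ℂ) (∑ y, PauliW a x y * f y) * (∑ y, PauliW a x y * g y) =
      ∑ p : (Fin n → ZMod 2) × (Fin n → ZMod 2),
        ((starRingEnd ℂ) (PauliW a x p.1) * PauliW a x p.2) *
          ((starRingEnd ℂ) (f p.1) * g p.2) := by
    intro x
    rw [map_sum, Finset.sum_mul_sum]
    rw [← Fintype.sum_prod_type']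
    refine Finset.sum_congr rfl fun p _ => ?_
    rw [map_mul]
    ring
  rw [Finset.sum_congr rfl fun x _ => e1 x, Finset.sum_comm]
  have e2 : ∀ p : (Fin n → ZMod 2) × (Fin n → ZMod 2),
      ∑ x, ((starRingEnd ℂ) (PauliW a x p.1) * PauliW a x p.2) *
        ((starRingEnd ℂ) (f p.1) * g p.2) =
      (if p.1 = p.2 then 1 else 0) * ((starRingEnd ℂ) (f p.1) * g p.2) := by
    intro p
    rw [← Finset.sum_mul, pauliW_unit]
  rw [Finset.sum_congr rfl fun p _ => e2 p]
  rw [Fintype.sum_prod_type]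
  simp only [ite_mul, one_mul, zero_mul]
  refine Finset.sum_congr rfl fun x _ => ?_
  rw [Finset.sum_ite_eq]
  simp

lemma pf_inner (ψ : (Fin n → ZMod 2) → ℂ) (a : Fin n → ZMod 2 × ZMod 2) :
    pf n ψ a = ∑ x, (starRingEnd ℂ) (ψ x) * (∑ y, PauliW a x y * ψ y) := by
  unfold pf
  rw [trace_mul_double]
  refine Finset.sum_congr rfl fun x _ => ?_
  rw [Finset.mul_sum]
  refine Finset.sum_congr rfl fun y _ => ?_
  show PauliW a x y * rankOne ψ y x = _
  unfold rankOne
  simp only [Matrix.of_apply]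
  ring

lemma pf_conj (ψ : (Fin n → ZMod 2) → ℂ) (a : Fin n → ZMod 2 × ZMod 2) :
    (starRingEnd ℂ) (pf n ψ a) = pf n ψ a := by
  rw [pf_inner, map_sum]
  have e1 : ∀ x, (starRingEnd ℂ) ((starRingEnd ℂ) (ψ x) * (∑ y, PauliW a x y * ψ y)) =
      ∑ y, PauliW a y x * ((starRingEnd ℂ) (ψ y) * ψ x) := by
    intro x
    rw [map_mul, Complex.conj_conj, map_sum, Finset.mul_sum]
    refine Finset.sum_congr rfl fun y _ => ?_
    rw [map_mul, pauliW_herm]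
    ring
  rw [Finset.sum_congr rfl fun x _ => e1 x, Finset.sum_comm]
  refine Finset.sum_congr rfl fun x _ => ?_
  rw [Finset.mul_sum]
  refine Finset.sum_congr rfl fun y _ => by ring

lemma pf_sub (ψ φ : (Fin n → ZMod 2) → ℂ) (a : Fin n → ZMod 2 × ZMod 2) :
    pf n ψ a - pf n φ a =
      (∑ x, (starRingEnd ℂ) (ψ x - φ x) * (∑ y, PauliW a x y * ψ y)) +
        (∑ x, (starRingEnd ℂ) (φ x) * (∑ y, PauliW a x y * (ψ y - φ y))) := by
  rw [pf_inner, pf_inner, ← Finset.sum_sub_distrib, ← Finset.sum_add_distrib]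
  refine Finset.sum_congr rfl fun x _ => ?_
  have : (∑ y, PauliW a x y * (ψ y - φ y)) =
      (∑ y, PauliW a x y * ψ y) - (∑ y, PauliW a x y * φ y) := by
    rw [← Finset.sum_sub_distrib]
    exact Finset.sum_congr rfl fun y _ => by ring
  rw [this, map_sub]
  ring

lemma conj_mul_self (z : ℂ) : (starRingEnd ℂ) z * z = (Complex.normSq z : ℂ) := by
  rw [mul_comm, Complex.mul_conj]

lemma sum_normSq_eq_one {ψ : (Fin n → ZMod 2) → ℂ}
    (hψ : ∑ x, (starRingEnd ℂ) (ψ x) * ψ x = 1) :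
    ∑ x, Complex.normSq (ψ x) = 1 := by
  have h := hψ
  rw [Finset.sum_congr rfl fun x _ => conj_mul_self (ψ x)] at h
  rw [← Complex.ofReal_sum] at h
  exact_mod_cast h

lemma sum_normSq_mulVec (a : Fin n → ZMod 2 × ZMod 2) (f : (Fin n → ZMod 2) → ℂ) :
    ∑ x, Complex.normSq (∑ y, PauliW a x y * f y) = ∑ x, Complex.normSq (f x) := by
  have h := pauliW_inner a f f
  rw [Finset.sum_congr rfl fun x _ => conj_mul_self (∑ y, PauliW a x y * f y),
    Finset.sum_congr rfl fun x _ => conj_mul_self (f x), ← Complex.ofReal_sum,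
    ← Complex.ofReal_sum] at h
  exact_mod_cast h

lemma pf_abs_le_one {ψ : (Fin n → ZMod 2) → ℂ}
    (hψ : ∑ x, (starRingEnd ℂ) (ψ x) * ψ x = 1) (a : Fin n → ZMod 2 × ZMod 2) :
    ‖pf n ψ a‖ ≤ 1 := by
  rw [pf_inner]
  calc ‖∑ x, (starRingEnd ℂ) (ψ x) * (∑ y, PauliW a x y * ψ y)‖
      ≤ Real.sqrt (∑ x, Complex.normSq (ψ x)) *
        Real.sqrt (∑ x, Complex.normSq (∑ y, PauliW a x y * ψ y)) := cs_complex _ _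
  _ = 1 := by
      rw [sum_normSq_mulVec, sum_normSq_eq_one hψ]
      simp

lemma pf_sub_abs_le {ψ φ : (Fin n → ZMod 2) → ℂ}
    (hψ : ∑ x, (starRingEnd ℂ) (ψ x) * ψ x = 1)
    (hφ : ∑ x, (starRingEnd ℂ) (φ x) * φ x = 1) (a : Fin n → ZMod 2 × ZMod 2) :
    ‖pf n ψ a - pf n φ a‖ ≤
      2 * Real.sqrt (∑ x, Complex.normSq (ψ x - φ x)) := by
  rw [pf_sub]
  set D := Real.sqrt (∑ x, Complex.normSq (ψ x - φ x)) with hD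
  have hterm1 : ‖∑ x, (starRingEnd ℂ) (ψ x - φ x) * (∑ y, PauliW a x y * ψ y)‖ ≤ D := by
    calc ‖∑ x, (starRingEnd ℂ) (ψ x - φ x) * (∑ y, PauliW a x y * ψ y)‖
        ≤ Real.sqrt (∑ x, Complex.normSq (ψ x - φ x)) *
          Real.sqrt (∑ x, Complex.normSq (∑ y, PauliW a x y * ψ y)) := cs_complex _ _
    _ = D := by rw [sum_normSq_mulVec, sum_normSq_eq_one hψ, ← hD]; simp
  have hterm2 : ‖∑ x, (starRingEnd ℂ) (φ x) * (∑ y, PauliW a x y * (ψ y - φ y))‖ ≤ D := by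
    calc ‖∑ x, (starRingEnd ℂ) (φ x) * (∑ y, PauliW a x y * (ψ y - φ y))‖
        ≤ Real.sqrt (∑ x, Complex.normSq (φ x)) *
          Real.sqrt (∑ x, Complex.normSq (∑ y, PauliW a x y * (ψ y - φ y))) := cs_complex _ _
    _ = D := by rw [sum_normSq_mulVec, sum_normSq_eq_one hφ, ← hD]; simp
  calc ‖_‖ ≤ ‖∑ x, (starRingEnd ℂ) (ψ x - φ x) * (∑ y, PauliW a x y * ψ y)‖ +
        ‖∑ x, (starRingEnd ℂ) (φ x) * (∑ y, PauliW a x y * (ψ y - φ y))‖ :=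
        norm_add_le _ _
  _ ≤ 2 * D := by linarith

def pfr (n : ℕ) (ψ : (Fin n → ZMod 2) → ℂ) (a : Fin n → ZMod 2 × ZMod 2) : ℝ :=
  (pf n ψ a).re

lemma pf_eq_re (ψ : (Fin n → ZMod 2) → ℂ) (a : Fin n → ZMod 2 × ZMod 2) :
    pf n ψ a = ((pfr n ψ a : ℝ) : ℂ) :=
  (Complex.conj_eq_iff_re.mp (pf_conj ψ a)).symm

lemma sum_pfr_sq {ψ : (Fin n → ZMod 2) → ℂ}
    (hψ : ∑ x, (starRingEnd ℂ) (ψ x) * ψ x = 1) :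
    ∑ a, (pfr n ψ a)^2 = 2^n := by
  have h := pf_mul_sum ψ ψ
  have h1 : (∑ x, ψ x * (starRingEnd ℂ) (ψ x)) = 1 := by
    rw [← hψ]; exact Finset.sum_congr rfl fun x _ => mul_comm _ _
  rw [h1, hψ] at h
  norm_num at h
  rw [Finset.sum_congr rfl fun a _ => by rw [pf_eq_re ψ a, ← Complex.ofReal_mul]] at h
  rw [← Complex.ofReal_sum] at h
  have : ∑ a, pfr n ψ a * pfr n ψ a = 2^n := by exact_mod_cast h
  rw [← this]
  exact Finset.sum_congr rfl fun a _ => sq (pfr n ψ a) ▸ by ring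

lemma sum_pfr_mul {ψ φ : (Fin n → ZMod 2) → ℂ} :
    ∑ a, pfr n ψ a * pfr n φ a =
      2^n * Complex.normSq (∑ x, ψ x * (starRingEnd ℂ) (φ x)) := by
  have h := pf_mul_sum ψ φ
  have hs : (∑ x, (starRingEnd ℂ) (ψ x) * φ x) =
      (starRingEnd ℂ) (∑ x, ψ x * (starRingEnd ℂ) (φ x)) := by
    rw [map_sum]
    exact Finset.sum_congr rfl fun x _ => by rw [map_mul, Complex.conj_conj]
  rw [hs, Complex.mul_conj] at h
  rw [Finset.sum_congr rfl fun a _ => by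
    rw [pf_eq_re ψ a, pf_eq_re φ a, ← Complex.ofReal_mul]] at h
  rw [← Complex.ofReal_sum] at h
  exact_mod_cast h

lemma sum_pfr_diff_sq {ψ φ : (Fin n → ZMod 2) → ℂ}
    (hψ : ∑ x, (starRingEnd ℂ) (ψ x) * ψ x = 1)
    (hφ : ∑ x, (starRingEnd ℂ) (φ x) * φ x = 1) :
    ∑ a, (pfr n ψ a - pfr n φ a)^2 ≤
      2 * 2^n * (∑ x, Complex.normSq (ψ x - φ x)) := by
  have hexp : ∑ a, (pfr n ψ a - pfr n φ a)^2 =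
      (∑ a, (pfr n ψ a)^2) - 2 * (∑ a, pfr n ψ a * pfr n φ a) + ∑ a, (pfr n φ a)^2 := by
    rw [Finset.mul_sum, ← Finset.sum_sub_distrib, ← Finset.sum_add_distrib]
    exact Finset.sum_congr rfl fun a _ => by ring
  rw [hexp, sum_pfr_sq hψ, sum_pfr_sq hφ, sum_pfr_mul]
  set s : ℂ := ∑ x, ψ x * (starRingEnd ℂ) (φ x) with hs
  have hDsq : ∑ x, Complex.normSq (ψ x - φ x) = 2 - 2 * s.re := by
    have : ∀ x, Complex.normSq (ψ x - φ x) =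
        Complex.normSq (ψ x) + Complex.normSq (φ x) - 2*(ψ x * (starRingEnd ℂ) (φ x)).re := by
      intro x; rw [Complex.normSq_sub]
    rw [Finset.sum_congr rfl fun x _ => this x]
    have hre : (∑ x, (ψ x * (starRingEnd ℂ) (φ x)).re) = s.re := by
      rw [hs, Complex.re_sum]
    rw [Finset.sum_sub_distrib, Finset.sum_add_distrib, sum_normSq_eq_one hψ,
      sum_normSq_eq_one hφ, ← Finset.mul_sum, hre]
    norm_num
  rw [hDsq]
  have hre_le : s.re ≤ ‖s‖ := Complex.re_le_norm s
  have hnsq : Complex.normSq s = (‖s‖)^2 := (Complex.sq_norm s).symm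
  have h2n : (0:ℝ) ≤ (2:ℝ)^n := by positivity
  rw [hnsq]
  nlinarith [sq_nonneg (‖s‖ - 1), h2n, hre_le,
    mul_nonneg h2n (sq_nonneg (‖s‖ - 1))]

lemma alpha_diff (ψ φ : (Fin n → ZMod 2) → ℂ) :
    alphaPlus n ψ - alphaPlus n φ =
      ((2:ℂ)^(2*n))⁻¹ * ((∑ a, ((pfr n ψ a)^4 - (pfr n φ a)^4) : ℝ) : ℂ) := by
  rw [alphaPlus_eq, alphaPlus_eq, ← mul_sub, ← Finset.sum_sub_distrib]
  congr 1
  rw [Complex.ofReal_sum]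
  refine Finset.sum_congr rfl fun a _ => ?_
  rw [pf_eq_re ψ a, pf_eq_re φ a]
  push_cast
  ring


/-- On the unit sphere of `ℂ^d`, `d = 2^n`, the functions
`α_+(ψ) = tr(P_{n,4}(|ψ⟩⟨ψ|)^{⊗4})` and `ε(ψ) = (d(d+3)/4)·α_+(ψ) − 1` are Lipschitz
with constants `5.4/d` and `5.4(d+3)/4`, respectively. -/
theorem stmt14 (n : ℕ) (hn : 1 ≤ n) (ψ φ : (Fin n → ZMod 2) → ℂ)
    (hψ : ∑ x, (starRingEnd ℂ) (ψ x) * ψ x = 1)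
    (hφ : ∑ x, (starRingEnd ℂ) (φ x) * φ x = 1) :
    ‖alphaPlus n ψ - alphaPlus n φ‖ ≤
        5.4 / (2 : ℝ) ^ n * Real.sqrt (∑ x, Complex.normSq (ψ x - φ x)) ∧
      ‖(((2 : ℂ) ^ n * ((2 : ℂ) ^ n + 3) / 4) * alphaPlus n ψ - 1) -
            (((2 : ℂ) ^ n * ((2 : ℂ) ^ n + 3) / 4) * alphaPlus n φ - 1)‖ ≤
        5.4 * ((2 : ℝ) ^ n + 3) / 4 * Real.sqrt (∑ x, Complex.normSq (ψ x - φ x)) := by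
  set D := Real.sqrt (∑ x, Complex.normSq (ψ x - φ x)) with hDdef
  have hDnn : 0 ≤ D := Real.sqrt_nonneg _
  have hDsq : D^2 = ∑ x, Complex.normSq (ψ x - φ x) :=
    Real.sq_sqrt (Finset.sum_nonneg fun x _ => Complex.normSq_nonneg _)
  have h2n : (0:ℝ) < (2:ℝ)^n := by positivity
  -- apply key_real
  have hkey : |∑ a, ((pfr n ψ a)^4 - (pfr n φ a)^4)| ≤ 5.4 * (2:ℝ)^n * D := by
    refine key_real (pfr n ψ) (pfr n φ) ((2:ℝ)^n) D h2n.le hDnn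
      (sum_pfr_sq hψ) (sum_pfr_sq hφ) ?_ ?_ ?_ ?_
    · rw [show (2:ℝ) * (2:ℝ)^n * D^2 = 2 * 2^n * (D^2) from by ring, hDsq]
      exact sum_pfr_diff_sq hψ hφ
    · intro a
      calc |pfr n ψ a| ≤ ‖pf n ψ a‖ := Complex.abs_re_le_norm _
      _ ≤ 1 := pf_abs_le_one hψ a
    · intro a
      calc |pfr n φ a| ≤ ‖pf n φ a‖ := Complex.abs_re_le_norm _
      _ ≤ 1 := pf_abs_le_one hφ a
    · intro a
      have h1 : pfr n ψ a - pfr n φ a = (pf n ψ a - pf n φ a).re := by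
        rw [Complex.sub_re]; rfl
      calc |pfr n ψ a - pfr n φ a| = |(pf n ψ a - pf n φ a).re| := by rw [h1]
      _ ≤ ‖pf n ψ a - pf n φ a‖ := Complex.abs_re_le_norm _
      _ ≤ 2 * D := pf_sub_abs_le hψ hφ a
  have hmain : ‖alphaPlus n ψ - alphaPlus n φ‖ ≤ 5.4 / (2:ℝ)^n * D := by
    rw [alpha_diff]
    rw [norm_mul, norm_inv, Complex.norm_real, Real.norm_eq_abs]
    have h2 : ‖(2:ℂ)^(2*n)‖ = (2:ℝ)^(2*n) := by
      rw [norm_pow, Complex.norm_two]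
    rw [h2]
    have h2' : (2:ℝ)^(2*n) = (2:ℝ)^n * (2:ℝ)^n := by
      rw [two_mul, pow_add]
    calc ((2:ℝ)^(2*n))⁻¹ * |∑ a, ((pfr n ψ a)^4 - (pfr n φ a)^4)|
        ≤ ((2:ℝ)^(2*n))⁻¹ * (5.4 * (2:ℝ)^n * D) := by
          have : (0:ℝ) ≤ ((2:ℝ)^(2*n))⁻¹ := by positivity
          exact mul_le_mul_of_nonneg_left hkey this
    _ = 5.4 / (2:ℝ)^n * D := by
        rw [h2']
        field_simp
  constructor
  · exact hmain
  · have heq : (((2:ℂ)^n * ((2:ℂ)^n + 3) / 4) * alphaPlus n ψ - 1) -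
        (((2:ℂ)^n * ((2:ℂ)^n + 3) / 4) * alphaPlus n φ - 1) =
        ((2:ℂ)^n * ((2:ℂ)^n + 3) / 4) * (alphaPlus n ψ - alphaPlus n φ) := by ring
    rw [heq, norm_mul]
    have hC : ‖(2:ℂ)^n * ((2:ℂ)^n + 3) / 4‖ = (2:ℝ)^n * ((2:ℝ)^n + 3) / 4 := by
      have : ((2:ℂ)^n * ((2:ℂ)^n + 3) / 4) = ((((2:ℝ)^n * ((2:ℝ)^n + 3) / 4 : ℝ)) : ℂ) := by
        push_cast; ring
      rw [this, Complex.norm_real, Real.norm_eq_abs, abs_of_nonneg (by positivity)]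
    rw [hC]
    calc (2:ℝ)^n * ((2:ℝ)^n + 3) / 4 * ‖alphaPlus n ψ - alphaPlus n φ‖
        ≤ (2:ℝ)^n * ((2:ℝ)^n + 3) / 4 * (5.4 / (2:ℝ)^n * D) := by
          have : (0:ℝ) ≤ (2:ℝ)^n * ((2:ℝ)^n + 3) / 4 := by positivity
          exact mul_le_mul_of_nonneg_left hmain this
    _ = 5.4 * ((2:ℝ)^n + 3) / 4 * D := by
        field_simp


end
end

section
/- Let ψ, φ be unit vectors in ℂ^d, let W be a Hermitian d×d matrix with −I ≤ W ≤ I (in the Loewner order), set X := |ψ⟩⟨ψ| − |φ⟩⟨φ| and λ := √(1 − |⟨ψ, φ⟩|²) (which equals half the trace norm of X). Then −λ(1+λ) ≤ ⟨φ, Wφ⟩ · tr(W·X), and ⟨φ, Wφ⟩ · tr(W·X) ≤ λ(1−λ) whenever 0 ≤ λ ≤ 1/2, while ⟨φ, Wφ⟩ · tr(W·X) ≤ 1/4 whenever 1/2 ≤ λ ≤ 1. -/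
open scoped BigOperators

noncomputable section

open scoped ComplexOrder

/- ### Auxiliary real-arithmetic lemmas -/

lemma stmt15_sqcmp (x S : ℝ) (h : x^2 ≤ S^2) (hS : 0 ≤ S) : x ≤ S := by
  nlinarith [sq_nonneg (x - S), sq_nonneg (x + S)]

lemma stmt15_ble (a s g r : ℝ) (h2 : a ≤ 1) (h4 : s ≤ 1) (h5 : 0 ≤ g) (h6 : g ≤ 1)
    (H8 : r^2 ≤ (1-g^2)*((1-a)*(1-s))) :
    (1-g^2)*a + g^2*s + 2*g*r ≤ 1 := by
  have hg2 : (0:ℝ) ≤ 1 - g^2 := by nlinarith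
  have hS : (0:ℝ) ≤ (1-g^2)*(1-a) + g^2*(1-s) := by
    nlinarith [mul_nonneg hg2 (by linarith : (0:ℝ) ≤ 1-a),
      mul_nonneg (sq_nonneg g) (by linarith : (0:ℝ) ≤ 1-s)]
  have h4xy : (2*g*r)^2 ≤ ((1-g^2)*(1-a) + g^2*(1-s))^2 := by
    nlinarith [sq_nonneg ((1-g^2)*(1-a) - g^2*(1-s)),
      mul_le_mul_of_nonneg_left H8 (by positivity : (0:ℝ) ≤ 4*g^2)]
  have := stmt15_sqcmp _ _ h4xy hS
  linarith

lemma stmt15_bge (a s g r : ℝ) (h1 : -1 ≤ a) (h3 : -1 ≤ s) (h5 : 0 ≤ g) (h6 : g ≤ 1)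
    (H9 : r^2 ≤ (1-g^2)*((1+a)*(1+s))) :
    -1 ≤ (1-g^2)*a + g^2*s + 2*g*r := by
  have hg2 : (0:ℝ) ≤ 1 - g^2 := by nlinarith
  have hS : (0:ℝ) ≤ (1-g^2)*(1+a) + g^2*(1+s) := by
    nlinarith [mul_nonneg hg2 (by linarith : (0:ℝ) ≤ 1+a),
      mul_nonneg (sq_nonneg g) (by linarith : (0:ℝ) ≤ 1+s)]
  have h4xy : (-(2*g*r))^2 ≤ ((1-g^2)*(1+a) + g^2*(1+s))^2 := by
    nlinarith [sq_nonneg ((1-g^2)*(1+a) - g^2*(1+s)),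
      mul_le_mul_of_nonneg_left H9 (by positivity : (0:ℝ) ≤ 4*g^2)]
  have := stmt15_sqcmp _ _ h4xy hS
  linarith

lemma stmt15_g1aux (a s g r : ℝ) (h1 : -1 ≤ a) (h2 : a ≤ 1) (h3 : -1 ≤ s) (h4 : s ≤ 1)
    (h5 : 0 ≤ g) (h6 : g ≤ 1) (H8 : r^2 ≤ (1-g^2)*((1-a)*(1-s))) (has : 0 ≤ a + s) :
    -(g*(1+g)) ≤ a*(g^2*(s-a) + 2*g*r) := by
  have hR : 0 ≤ g*(1+g) + a*g^2*(s-a) := by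
    nlinarith [mul_nonneg h5 (by linarith : (0:ℝ) ≤ 1-g),
      mul_nonneg (sq_nonneg g) (mul_nonneg (by linarith : (0:ℝ) ≤ 1+a) (by linarith : (0:ℝ) ≤ 1+s)),
      mul_nonneg (sq_nonneg g) (mul_nonneg (by linarith : (0:ℝ) ≤ 1-a) (by linarith : (0:ℝ) ≤ 1-s)),
      mul_nonneg (sq_nonneg g) (mul_nonneg (by linarith : (0:ℝ) ≤ 1-a) (by linarith : (0:ℝ) ≤ 1+a))]
  have hP1 : 4*a^2*((1-g^2)*((1-a)*(1-s))) ≤ ((1+g)+a*g*(s-a))^2 := by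
    nlinarith [sq_nonneg (1+g-2*a^2+a*g*(s+a)),
      mul_nonneg (mul_nonneg (mul_nonneg (sq_nonneg a) (by linarith : (0:ℝ) ≤ 1-g)) has)
        (by linarith : (0:ℝ) ≤ 1+g-a)]
  have h1' : (-(2*a*g*r))^2 ≤ (g*(1+g) + a*g^2*(s-a))^2 := by
    have hh := mul_le_mul_of_nonneg_left H8 (by positivity : (0:ℝ) ≤ 4*a^2)
    have hh2 := mul_le_mul_of_nonneg_left hP1 (sq_nonneg g)
    nlinarith [hh, hh2]
  have := stmt15_sqcmp _ _ h1' hR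
  nlinarith [this]

lemma stmt15_g2aux (a s g r : ℝ) (h1 : -1 ≤ a) (h2 : a ≤ 1) (h3 : -1 ≤ s) (h4 : s ≤ 1)
    (h5 : 0 ≤ g) (h6 : g ≤ 1) (H8 : r^2 ≤ (1-g^2)*((1-a)*(1-s))) (has : 0 ≤ a + s)
    (hg : g ≤ 1/2) :
    a*(g^2*(s-a) + 2*g*r) ≤ g*(1-g) := by
  rcases le_or_gt a (1-g) with hc | hc
  · have hR : 0 ≤ g*(1-g) - a*g^2*(s-a) := by
      nlinarith [mul_nonneg h5 (by linarith : (0:ℝ) ≤ 4-5*g),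
        sq_nonneg (g*(2*a-s)),
        mul_nonneg (sq_nonneg g) (mul_nonneg (by linarith : (0:ℝ) ≤ 1-s) (by linarith : (0:ℝ) ≤ 1+s))]
    have hP2 : 4*a^2*((1-g^2)*((1-a)*(1-s))) ≤ ((1-g)-a*g*(s-a))^2 := by
      nlinarith [sq_nonneg (1-g-2*a^2-a*g*(s+a)),
        mul_nonneg (mul_nonneg (mul_nonneg (sq_nonneg a) (by linarith : (0:ℝ) ≤ 1+g)) has)
          (by linarith : (0:ℝ) ≤ 1-g-a)]
    have h1' : (2*a*g*r)^2 ≤ (g*(1-g) - a*g^2*(s-a))^2 := by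
      have hh := mul_le_mul_of_nonneg_left H8 (by positivity : (0:ℝ) ≤ 4*a^2)
      have hh2 := mul_le_mul_of_nonneg_left hP2 (sq_nonneg g)
      nlinarith [hh, hh2]
    have := stmt15_sqcmp _ _ h1' hR
    nlinarith [this]
  · have hb := stmt15_ble a s g r h2 h4 h5 h6 H8
    have ha0 : 0 ≤ a := by linarith
    nlinarith [mul_le_mul_of_nonneg_left hb ha0]

lemma stmt15_g3aux (a s g r : ℝ) (h1 : -1 ≤ a) (h2 : a ≤ 1) (h3 : -1 ≤ s) (h4 : s ≤ 1)
    (h5 : 0 ≤ g) (h6 : g ≤ 1) (H8 : r^2 ≤ (1-g^2)*((1-a)*(1-s)))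
    (H9 : r^2 ≤ (1-g^2)*((1+a)*(1+s))) :
    a*(g^2*(s-a) + 2*g*r) ≤ 1/4 := by
  rcases le_or_gt 0 a with ha | ha
  · have hb := stmt15_ble a s g r h2 h4 h5 h6 H8
    nlinarith [mul_le_mul_of_nonneg_left hb ha, sq_nonneg (2*a-1)]
  · have hb := stmt15_bge a s g r h1 h3 h5 h6 H9
    nlinarith [mul_le_mul_of_nonneg_left hb (by linarith : (0:ℝ) ≤ -a), sq_nonneg (2*a+1)]

/-- Discriminant-style lemma. -/
lemma stmt15_disc (A B C : ℝ) (hA : 0 ≤ A) (hB : 0 ≤ B)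
    (h : ∀ n : ℝ, 0 ≤ A*n^2 - 2*B*n + C) : B^2 ≤ A*C := by
  rcases eq_or_lt_of_le hB with hB0 | hBpos
  · have h0 := h 0
    nlinarith
  · rcases eq_or_lt_of_le hA with hA0 | hApos
    · exfalso
      have key := h ((C+1)/(2*B))
      rw [← hA0] at key
      have e : 2*B*((C+1)/(2*B)) = C+1 := by field_simp
      nlinarith [key, e]
    · have key := h (B/A)
      have hA' : A ≠ 0 := ne_of_gt hApos
      have e1 : A*(B/A)^2 = B^2/A := by field_simp
      have e2 : 2*B*(B/A) = 2*(B^2/A) := by field_simp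
      rw [e1, e2] at key
      have h3 : B^2/A ≤ C := by linarith
      have := (div_le_iff₀ hApos).mp h3
      linarith [this]

/-- Main real-variable lemma. -/
lemma stmt15_main_real (a sw g rw T : ℝ) (ha1 : -1 ≤ a) (ha2 : a ≤ 1)
    (hg : 0 < g) (hg1 : g ≤ 1) (hs1 : -(g^2) ≤ sw) (hs2 : sw ≤ g^2)
    (hT : 0 ≤ T) (hT8 : T^2 ≤ (g^2 - sw) * (T * (1-a))) (hT9 : T^2 ≤ (g^2 + sw) * (T * (1+a)))
    (hr : rw^2 ≤ (1 - g^2) * T) :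
    (-(g*(1+g)) ≤ a*(sw - g^2*a + 2*rw)) ∧
      (g ≤ 1/2 → a*(sw - g^2*a + 2*rw) ≤ g*(1-g)) ∧
      (1/2 ≤ g → a*(sw - g^2*a + 2*rw) ≤ 1/4) := by
  have hg2 : (0:ℝ) < g^2 := by positivity
  have hg2' : (0:ℝ) ≤ 1 - g^2 := by nlinarith
  have hT8' : T ≤ (1-a)*(g^2 - sw) := by
    rcases eq_or_lt_of_le hT with h0 | h0
    · rw [← h0]; exact mul_nonneg (by linarith) (by linarith)
    · nlinarith
  have hT9' : T ≤ (1+a)*(g^2 + sw) := by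
    rcases eq_or_lt_of_le hT with h0 | h0
    · rw [← h0]; exact mul_nonneg (by linarith) (by linarith)
    · nlinarith
  set s : ℝ := sw/g^2 with hs_def
  set r : ℝ := rw/g with hr_def
  have hsw : sw = g^2 * s := by rw [hs_def]; field_simp
  have hrw : rw = g * r := by rw [hr_def]; field_simp
  have hs3 : -1 ≤ s := by rw [hs_def]; rw [le_div_iff₀ hg2]; linarith
  have hs4 : s ≤ 1 := by rw [hs_def]; rw [div_le_iff₀ hg2]; linarith
  have heq : a*(sw - g^2*a + 2*rw) = a*(g^2*(s-a) + 2*g*r) := by rw [hsw, hrw]; ring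
  have H8 : r^2 ≤ (1-g^2)*((1-a)*(1-s)) := by
    have key : rw^2 ≤ (1-g^2)*((1-a)*(g^2-sw)) :=
      hr.trans (mul_le_mul_of_nonneg_left hT8' hg2')
    rw [hr_def, hs_def, div_pow, div_le_iff₀ hg2]
    have e : (1-g^2)*((1-a)*(1-sw/g^2))*g^2 = (1-g^2)*((1-a)*(g^2-sw)) := by
      field_simp
    rw [e]; exact key
  have H9 : r^2 ≤ (1-g^2)*((1+a)*(1+s)) := by
    have key : rw^2 ≤ (1-g^2)*((1+a)*(g^2+sw)) :=
      hr.trans (mul_le_mul_of_nonneg_left hT9' hg2')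
    rw [hr_def, hs_def, div_pow, div_le_iff₀ hg2]
    have e : (1-g^2)*((1+a)*(1+sw/g^2))*g^2 = (1-g^2)*((1+a)*(g^2+sw)) := by
      field_simp
    rw [e]; exact key
  rw [heq]
  have hgnn := le_of_lt hg
  refine ⟨?_, ?_, ?_⟩
  · rcases le_total 0 (a+s) with has | has
    · exact stmt15_g1aux a s g r ha1 ha2 hs3 hs4 hgnn hg1 H8 has
    · have h := stmt15_g1aux (-a) (-s) g (-r) (by linarith) (by linarith) (by linarith)
        (by linarith) hgnn hg1 (by nlinarith [H9]) (by linarith)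
      nlinarith [h]
  · intro hghalf
    rcases le_total 0 (a+s) with has | has
    · exact stmt15_g2aux a s g r ha1 ha2 hs3 hs4 hgnn hg1 H8 has hghalf
    · have h := stmt15_g2aux (-a) (-s) g (-r) (by linarith) (by linarith) (by linarith)
        (by linarith) hgnn hg1 (by nlinarith [H9]) (by linarith) hghalf
      nlinarith [h]
  · intro hghalf
    exact stmt15_g3aux a s g r ha1 ha2 hs3 hs4 hgnn hg1 H8 H9

set_option maxHeartbeats 1600000 in
/-- For unit vectors `ψ, φ ∈ ℂ^d`, a Hermitian `W` with `−I ≤ W ≤ I`,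
`X = |ψ⟩⟨ψ| − |φ⟩⟨φ|`, and `λ = √(1 − |⟨ψ,φ⟩|²)` (half the trace norm of `X`):
`−λ(1+λ) ≤ ⟨φ, Wφ⟩·tr(WX)`; moreover `⟨φ, Wφ⟩·tr(WX) ≤ λ(1−λ)` when `0 ≤ λ ≤ 1/2` and
`⟨φ, Wφ⟩·tr(WX) ≤ 1/4` when `1/2 ≤ λ ≤ 1`. -/
theorem stmt15 (d : ℕ) (ψ φ : Fin d → ℂ)
    (hψ : ∑ i, (starRingEnd ℂ) (ψ i) * ψ i = 1)
    (hφ : ∑ i, (starRingEnd ℂ) (φ i) * φ i = 1)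
    (W : Matrix (Fin d) (Fin d) ℂ) (hW : W.IsHermitian)
    (hWle : (1 - W).PosSemidef) (hWge : (W + 1).PosSemidef) :
    let lam : ℝ := Real.sqrt (1 - Complex.normSq (∑ i, (starRingEnd ℂ) (ψ i) * φ i))
    let q : ℂ := (∑ i, (starRingEnd ℂ) (φ i) * Matrix.mulVec W φ i) *
      Matrix.trace (W * (rankOne ψ - rankOne φ))
    ((-(lam * (1 + lam)) : ℝ) : ℂ) ≤ q ∧
      (lam ≤ 1 / 2 → q ≤ ((lam * (1 - lam) : ℝ) : ℂ)) ∧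
      (1 / 2 ≤ lam → lam ≤ 1 → q ≤ (1 / 4 : ℂ)) := by
  intro lam q
  classical
  set c : ℂ := ∑ i, (starRingEnd ℂ) (ψ i) * φ i with hc_def
  have hlam : lam = Real.sqrt (1 - Complex.normSq c) := rfl
  have hqdef : q = (∑ i, (starRingEnd ℂ) (φ i) * Matrix.mulVec W φ i) *
      Matrix.trace (W * (rankOne ψ - rankOne φ)) := rfl
  set A : ℂ := dotProduct (star φ) (W.mulVec φ) with hA_def
  set B : ℂ := dotProduct (star ψ) (W.mulVec ψ) with hB_def
  set c' : ℂ := dotProduct (star φ) ψ with hc'_def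
  set w : Fin d → ℂ := ψ - c' • φ with hw_def
  set tw : ℂ := dotProduct (star φ) (W.mulVec w) with htw_def
  set Sw : ℂ := dotProduct (star w) (W.mulVec w) with hSw_def
  -- basic inner products
  have hφ1 : dotProduct (star φ) φ = 1 := by
    simpa [dotProduct] using hφ
  have hψ1 : dotProduct (star ψ) ψ = 1 := by
    simpa [dotProduct] using hψ
  have hψφ : dotProduct (star ψ) φ = c := by
    rw [hc_def]; simp [dotProduct]
  -- hermitian symmetry
  have hherm : ∀ v₁ v₂ : Fin d → ℂ, dotProduct (star v₁) (W.mulVec v₂)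
      = (starRingEnd ℂ) (dotProduct (star v₂) (W.mulVec v₁)) := by
    intro v₁ v₂
    rw [starRingEnd_apply, Matrix.star_dotProduct, Matrix.star_mulVec, hW.eq,
      ← Matrix.dotProduct_mulVec]
  -- expansion lemmas
  have hexp : ∀ (M : Matrix (Fin d) (Fin d) ℂ) (x y : ℂ) (v₁ v₂ : Fin d → ℂ),
      dotProduct (star (x • v₁ + y • v₂)) (M.mulVec (x • v₁ + y • v₂)) =
        (starRingEnd ℂ) x * x * dotProduct (star v₁) (M.mulVec v₁)
        + (starRingEnd ℂ) x * y * dotProduct (star v₁) (M.mulVec v₂)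
        + (starRingEnd ℂ) y * x * dotProduct (star v₂) (M.mulVec v₁)
        + (starRingEnd ℂ) y * y * dotProduct (star v₂) (M.mulVec v₂) := by
    intro M x y v₁ v₂
    simp only [star_add, star_smul, Matrix.mulVec_add, Matrix.mulVec_smul,
      add_dotProduct, dotProduct_add, smul_dotProduct,
      dotProduct_smul, smul_eq_mul, starRingEnd_apply]
    ring
  have hexp0 : ∀ (x y : ℂ) (v₁ v₂ : Fin d → ℂ),
      dotProduct (star (x • v₁ + y • v₂)) (x • v₁ + y • v₂) =
        (starRingEnd ℂ) x * x * dotProduct (star v₁) v₁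
        + (starRingEnd ℂ) x * y * dotProduct (star v₁) v₂
        + (starRingEnd ℂ) y * x * dotProduct (star v₂) v₁
        + (starRingEnd ℂ) y * y * dotProduct (star v₂) v₂ := by
    intro x y v₁ v₂
    simp only [star_add, star_smul, add_dotProduct, dotProduct_add,
      smul_dotProduct, dotProduct_smul, smul_eq_mul, starRingEnd_apply]
    ring
  have hsub : ∀ v : Fin d → ℂ, dotProduct (star v) ((1 - W).mulVec v)
      = dotProduct (star v) v - dotProduct (star v) (W.mulVec v) := by
    intro v
    rw [Matrix.sub_mulVec, dotProduct_sub, Matrix.one_mulVec]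
  have hadd : ∀ v : Fin d → ℂ, dotProduct (star v) ((W + 1).mulVec v)
      = dotProduct (star v) (W.mulVec v) + dotProduct (star v) v := by
    intro v
    rw [Matrix.add_mulVec, dotProduct_add, Matrix.one_mulVec]
  -- orthogonality
  have hφw : dotProduct (star φ) w = 0 := by
    rw [hw_def, dotProduct_sub, dotProduct_smul, ← hc'_def, hφ1,
      smul_eq_mul, mul_one, sub_self]
  have hwφ : dotProduct (star w) φ = 0 := by
    rw [Matrix.star_dotProduct, hφw, star_zero]
  have hc'c : c' = (starRingEnd ℂ) c := by
    rw [hc'_def, hc_def, map_sum, dotProduct]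
    refine Finset.sum_congr rfl fun i _ => ?_
    simp [mul_comm]
  have hnc : Complex.normSq c' = Complex.normSq c := by
    rw [hc'c, Complex.normSq_conj]
  have hφψ : dotProduct (star ψ) (c' • φ) = Complex.normSq c := by
    rw [dotProduct_smul, hψφ, smul_eq_mul, hc'c, mul_comm, Complex.mul_conj]
  have hww : dotProduct (star w) w = ((1 - Complex.normSq c : ℝ) : ℂ) := by
    have e : w = (1:ℂ) • ψ + (-c') • φ := by rw [hw_def]; module
    rw [e, hexp0, hψ1, hψφ, ← hc'_def, hφ1]
    simp only [map_one, map_neg, one_mul, mul_one, neg_mul, mul_neg, neg_neg]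
    rw [hc'c]
    push_cast
    rw [← Complex.mul_conj c]
    ring
  -- nonnegativity of 1 - |c|^2
  have h1c : 0 ≤ 1 - Complex.normSq c := by
    have l1 := hWle.dotProduct_mulVec_nonneg w
    have l2 := hWge.dotProduct_mulVec_nonneg w
    rw [hsub, hww] at l1
    rw [hadd, hww] at l2
    have e : (((1 - Complex.normSq c : ℝ) : ℂ) - dotProduct (star w) (W.mulVec w))
        + (dotProduct (star w) (W.mulVec w) + ((1 - Complex.normSq c : ℝ) : ℂ))
        = (((2 * (1 - Complex.normSq c) : ℝ)) : ℂ) := by push_cast; ring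
    have l3 := add_nonneg l1 l2
    rw [e] at l3
    have := Complex.zero_le_real.mp l3
    linarith
  have hlam2 : lam^2 = 1 - Complex.normSq c := by rw [hlam]; exact Real.sq_sqrt h1c
  have hg0 : 0 ≤ lam := Real.sqrt_nonneg _
  have hg1 : lam ≤ 1 := by
    have := Real.sqrt_le_sqrt (show 1 - Complex.normSq c ≤ 1 by
      linarith [Complex.normSq_nonneg c])
    rw [Real.sqrt_one] at this
    rw [hlam]; exact this
  -- realness of A and Sw
  have hAc : A = (starRingEnd ℂ) A := by
    have := hherm φ φ; rw [← hA_def] at this; exact this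
  have hA : A = ((A.re : ℝ) : ℂ) := (Complex.conj_eq_iff_re.mp hAc.symm).symm
  have hSc : Sw = (starRingEnd ℂ) Sw := by
    have := hherm w w; rw [← hSw_def] at this; exact this
  have hS : Sw = ((Sw.re : ℝ) : ℂ) := (Complex.conj_eq_iff_re.mp hSc.symm).symm
  have hwWφ : dotProduct (star w) (W.mulVec φ) = (starRingEnd ℂ) tw := by
    have := hherm w φ; rw [← htw_def] at this; exact this
  set a : ℝ := A.re with ha_def
  set sw : ℝ := Sw.re with hsw_def
  set T : ℝ := Complex.normSq tw with hT_def
  set rw' : ℝ := ((starRingEnd ℂ) c' * tw).re with hrw_def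
  -- a bounds
  have ha2 : a ≤ 1 := by
    have i1 := hWle.dotProduct_mulVec_nonneg φ
    rw [hsub, hφ1, ← hA_def, hA] at i1
    have e : (1:ℂ) - ((a:ℝ):ℂ) = ((1 - a : ℝ) : ℂ) := by push_cast; ring
    rw [e] at i1
    have := Complex.zero_le_real.mp i1; linarith
  have ha1 : -1 ≤ a := by
    have i2 := hWge.dotProduct_mulVec_nonneg φ
    rw [hadd, hφ1, ← hA_def, hA] at i2
    have e : ((a:ℝ):ℂ) + 1 = ((a + 1 : ℝ) : ℂ) := by push_cast; ring
    rw [e] at i2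
    have := Complex.zero_le_real.mp i2; linarith
  -- sw bounds
  have hs2 : sw ≤ 1 - Complex.normSq c := by
    have i3 := hWle.dotProduct_mulVec_nonneg w
    rw [hsub, hww, ← hSw_def, hS] at i3
    have e : ((1 - Complex.normSq c : ℝ) : ℂ) - ((sw:ℝ):ℂ)
        = ((1 - Complex.normSq c - sw : ℝ) : ℂ) := by push_cast; ring
    rw [e] at i3
    have := Complex.zero_le_real.mp i3; linarith
  have hs1 : -(1 - Complex.normSq c) ≤ sw := by
    have i4 := hWge.dotProduct_mulVec_nonneg w
    rw [hadd, hww, ← hSw_def, hS] at i4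
    have e : ((sw:ℝ):ℂ) + ((1 - Complex.normSq c : ℝ) : ℂ)
        = ((sw + (1 - Complex.normSq c) : ℝ) : ℂ) := by push_cast; ring
    rw [e] at i4
    have := Complex.zero_le_real.mp i4; linarith
  have hTc : ((starRingEnd ℂ) tw) * tw = ((T:ℝ):ℂ) := by
    rw [hT_def, mul_comm, Complex.mul_conj]
  -- quadratic inequalities
  have hquad8 : ∀ n : ℝ, 0 ≤ (1 - Complex.normSq c - sw)*n^2 - 2*T*n + T*(1-a) := by
    intro n
    have inst := hWle.dotProduct_mulVec_nonneg (tw • φ + ((n:ℂ)) • w)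
    rw [hsub, hexp0, hexp, hφ1, hφw, hwφ, hww, ← hA_def, ← htw_def, ← hSw_def,
      hwWφ, hA, hS] at inst
    have e : ((starRingEnd ℂ) tw * tw * 1 + (starRingEnd ℂ) tw * (n:ℂ) * 0
        + (starRingEnd ℂ) (n:ℂ) * tw * 0
        + (starRingEnd ℂ) (n:ℂ) * (n:ℂ) * ((1 - Complex.normSq c : ℝ) : ℂ))
        - ((starRingEnd ℂ) tw * tw * ((a:ℝ):ℂ) + (starRingEnd ℂ) tw * (n:ℂ) * tw
        + (starRingEnd ℂ) (n:ℂ) * tw * ((starRingEnd ℂ) tw)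
        + (starRingEnd ℂ) (n:ℂ) * (n:ℂ) * ((sw:ℝ):ℂ))
        = (((1 - Complex.normSq c - sw)*n^2 - 2*T*n + T*(1-a) : ℝ) : ℂ) := by
      rw [Complex.conj_ofReal]
      push_cast [hT_def]
      rw [← Complex.mul_conj tw]
      ring
    rw [e] at inst
    exact Complex.zero_le_real.mp inst
  have hquad9 : ∀ n : ℝ, 0 ≤ (1 - Complex.normSq c + sw)*n^2 - 2*T*n + T*(1+a) := by
    intro n
    have inst := hWge.dotProduct_mulVec_nonneg ((-tw) • φ + ((n:ℂ)) • w)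
    rw [hadd, hexp0, hexp, hφ1, hφw, hwφ, hww, ← hA_def, ← htw_def, ← hSw_def,
      hwWφ, hA, hS] at inst
    have e : ((starRingEnd ℂ) (-tw) * (-tw) * ((a:ℝ):ℂ) + (starRingEnd ℂ) (-tw) * (n:ℂ) * tw
        + (starRingEnd ℂ) (n:ℂ) * (-tw) * ((starRingEnd ℂ) tw)
        + (starRingEnd ℂ) (n:ℂ) * (n:ℂ) * ((sw:ℝ):ℂ))
        + ((starRingEnd ℂ) (-tw) * (-tw) * 1 + (starRingEnd ℂ) (-tw) * (n:ℂ) * 0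
        + (starRingEnd ℂ) (n:ℂ) * (-tw) * 0
        + (starRingEnd ℂ) (n:ℂ) * (n:ℂ) * ((1 - Complex.normSq c : ℝ) : ℂ))
        = (((1 - Complex.normSq c + sw)*n^2 - 2*T*n + T*(1+a) : ℝ) : ℂ) := by
      rw [Complex.conj_ofReal, map_neg]
      push_cast [hT_def]
      rw [← Complex.mul_conj tw]
      ring
    rw [e] at inst
    exact Complex.zero_le_real.mp inst
  have hT0 : 0 ≤ T := Complex.normSq_nonneg _
  have hT8 : T^2 ≤ (1 - Complex.normSq c - sw)*(T*(1-a)) := by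
    have := stmt15_disc (1 - Complex.normSq c - sw) T (T*(1-a)) (by linarith) hT0 hquad8
    nlinarith [this]
  have hT9 : T^2 ≤ (1 - Complex.normSq c + sw)*(T*(1+a)) := by
    have := stmt15_disc (1 - Complex.normSq c + sw) T (T*(1+a)) (by linarith) hT0 hquad9
    nlinarith [this]
  have hrle : rw'^2 ≤ Complex.normSq c * T := by
    have h1' : Complex.normSq ((starRingEnd ℂ) c' * tw) = Complex.normSq c * T := by
      rw [Complex.normSq_mul, Complex.normSq_conj, hnc, hT_def]
    have h2' := Complex.normSq_apply ((starRingEnd ℂ) c' * tw)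
    rw [hrw_def]
    nlinarith [sq_nonneg (((starRingEnd ℂ) c' * tw).im)]
  -- B value
  have hψdec : ψ = c' • φ + (1:ℂ) • w := by rw [hw_def]; module
  have hBval : B = ((Complex.normSq c * a + 2*rw' + sw : ℝ) : ℂ) := by
    rw [hB_def]
    conv_lhs => rw [hψdec]
    rw [hexp, ← hA_def, ← htw_def, ← hSw_def, hwWφ, hA, hS]
    simp only [map_one, one_mul, mul_one]
    have e1 : (starRingEnd ℂ) c' * c' = ((Complex.normSq c : ℝ) : ℂ) := by
      rw [mul_comm, Complex.mul_conj, hnc]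
    have e2 : (starRingEnd ℂ) c' * tw + c' * ((starRingEnd ℂ) tw)
        = ((2*rw' : ℝ) : ℂ) := by
      have := Complex.add_conj ((starRingEnd ℂ) c' * tw)
      rw [map_mul, Complex.conj_conj] at this
      rw [this]
    rw [e1]
    push_cast
    push_cast at e2
    linear_combination e2
  -- q value
  have hqval : q = ((a * (sw - (1 - Complex.normSq c)*a + 2*rw') : ℝ) : ℂ) := by
    have htr : ∀ v : Fin d → ℂ, (W * rankOne v).trace
        = dotProduct (star v) (W.mulVec v) := by
      intro v
      simp only [Matrix.trace, Matrix.diag_apply, Matrix.mul_apply, rankOne,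
        Matrix.of_apply, dotProduct, Matrix.mulVec, Finset.mul_sum]
      refine Finset.sum_congr rfl fun i _ => Finset.sum_congr rfl fun j _ => ?_
      simp only [Pi.star_apply, RCLike.star_def]
      ring
    have hfac : (∑ i, (starRingEnd ℂ) (φ i) * Matrix.mulVec W φ i) = A := by
      rw [hA_def, dotProduct]
      refine Finset.sum_congr rfl fun i _ => ?_
      simp only [Pi.star_apply, RCLike.star_def]
    have htrace : (W * (rankOne ψ - rankOne φ)).trace = B - A := by
      rw [Matrix.mul_sub, Matrix.trace_sub, htr ψ, htr φ, ← hA_def, ← hB_def]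
    rw [hqdef, hfac, htrace, hBval, hA]
    push_cast
    ring
  -- conclude
  rcases eq_or_lt_of_le h1c with hzero | hpos
  · -- lam = 0 : everything degenerates
    have hl0 : lam = 0 := by
      rw [hlam, ← hzero, Real.sqrt_zero]
    have hsw0 : sw = 0 := by rw [← hzero] at hs1 hs2; linarith
    have hT00 : T = 0 := by
      have hc0 : 1 - Complex.normSq c - sw = 0 := by linarith
      rw [hc0, zero_mul] at hT8
      have h2 : T^2 = 0 := le_antisymm hT8 (sq_nonneg _)
      exact pow_eq_zero_iff (by norm_num : (2:ℕ) ≠ 0) |>.mp h2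
    have hrw0 : rw' = 0 := by
      rw [hT00, mul_zero] at hrle
      have h2 : rw'^2 = 0 := le_antisymm hrle (sq_nonneg _)
      exact pow_eq_zero_iff (by norm_num : (2:ℕ) ≠ 0) |>.mp h2
    have hq0 : q = ((0:ℝ):ℂ) := by
      rw [hqval, hsw0, hrw0, ← hzero]
      norm_num
    refine ⟨?_, fun _ => ?_, fun _ _ => ?_⟩
    · rw [hq0, hl0]
      rw [Complex.real_le_real]
      norm_num
    · rw [hq0, hl0]
      rw [Complex.real_le_real]
      norm_num
    · rw [hq0]
      rw [show ((1:ℂ)/4) = (((1:ℝ)/4 : ℝ) : ℂ) by norm_num]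
      rw [Complex.real_le_real]
      norm_num
  · -- lam > 0
    have hgpos : 0 < lam := by
      rw [hlam]; exact Real.sqrt_pos.mpr hpos
    have hL : 1 - Complex.normSq c = lam^2 := hlam2.symm
    rw [hL] at hs1 hs2 hT8 hT9
    have hrle' : rw'^2 ≤ (1 - lam^2) * T := by
      have : Complex.normSq c = 1 - lam^2 := by linarith [hlam2]
      rw [this] at hrle; exact hrle
    obtain ⟨R1, R2, R3⟩ := stmt15_main_real a sw lam rw' T ha1 ha2 hgpos hg1 hs1 hs2
      hT0 hT8 hT9 hrle'
    have hqval' : q = ((a * (sw - lam^2*a + 2*rw') : ℝ) : ℂ) := by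
      rw [hqval, hL]
    refine ⟨?_, fun hh => ?_, fun hh _ => ?_⟩
    · rw [hqval', Complex.real_le_real]
      linarith [R1]
    · rw [hqval', Complex.real_le_real]
      linarith [R2 hh]
    · rw [hqval']
      rw [show ((1:ℂ)/4) = (((1:ℝ)/4 : ℝ) : ℂ) by norm_num]
      rw [Complex.real_le_real]
      linarith [R3 hh]


end
end

section
/- Let d, t ≥ 1 and let A be a linear operator on (ℂ^d)^{⊗t} satisfying P_[t]·A·P_[t] = A (i.e. A is supported on the symmetric subspace Sym_t(ℂ^d)). If tr(A·(|ψ⟩⟨ψ|)^{⊗t}) = 0 for every vector ψ ∈ ℂ^d, then A = 0. (Hence the polarization map A ↦ p_A with p_A(ψ) := tr(A·(|ψ⟩⟨ψ|)^{⊗t}) is a linear isomorphism between operators on Sym_t(ℂ^d) and polynomials on ℂ^d homogeneous of bi-degree (t,t) in the coordinates of ψ and their complex conjugates.) -/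
open scoped BigOperators

noncomputable section

/-! ### Auxiliary lemmas -/

section Aux

open MvPolynomial

/-- A multivariate polynomial over `ℂ` vanishing at all real points is zero (Fin version). -/
lemma realVanish_fin : ∀ (n : ℕ) (q : MvPolynomial (Fin n) ℂ),
    (∀ v : Fin n → ℝ, eval (fun i => (v i : ℂ)) q = 0) → q = 0 := by
  intro n
  induction n with
  | zero =>
    intro q h
    obtain ⟨a, rfl⟩ := C_surjective (Fin 0) q
    have h0 := h (fun _ => 0)
    rw [eval_C] at h0
    rw [h0, map_zero]
  | succ n ih =>
    intro q h
    have key : ∀ v : Fin n → ℝ,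
        Polynomial.map (eval fun i => (v i : ℂ)) (finSuccEquiv ℂ n q) = 0 := by
      intro v
      apply Polynomial.eq_zero_of_infinite_isRoot
      apply Set.Infinite.mono (s := Set.range ((↑) : ℝ → ℂ))
      · rintro z ⟨r, rfl⟩
        show Polynomial.IsRoot _ _
        have hcast : (fun i => ((Fin.cons r v : Fin (n+1) → ℝ) i : ℂ))
            = Fin.cons (r : ℂ) (fun i => (v i : ℂ)) := by
          funext i
          refine Fin.cases ?_ ?_ i <;> simp
        rw [Polynomial.IsRoot, ← eval_eq_eval_mv_eval', ← hcast]
        exact h (Fin.cons r v)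
      · exact Set.infinite_range_of_injective Complex.ofReal_injective
    have hfz : finSuccEquiv ℂ n q = 0 := by
      ext k : 1
      rw [Polynomial.coeff_zero]
      apply ih
      intro v
      have hk := congrArg (fun p => Polynomial.coeff p k) (key v)
      simpa [Polynomial.coeff_map] using hk
    have := congrArg (finSuccEquiv ℂ n).symm hfz
    simpa using this

/-- A multivariate polynomial over `ℂ` vanishing at all real points is zero. -/
lemma realVanish {ι : Type*} [Fintype ι] (q : MvPolynomial ι ℂ)
    (h : ∀ v : ι → ℝ, eval (fun i => (v i : ℂ)) q = 0) : q = 0 := by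
  classical
  let e := Fintype.equivFin ι
  have h0 : rename e q = 0 := by
    apply realVanish_fin
    intro v
    rw [eval_rename]
    exact h (fun i => v (e i))
  exact rename_injective (⇑e) e.injective (by rw [h0, map_zero])

lemma aeval_eq_eval' {ι : Type*} (g : ι → ℂ) (p : MvPolynomial ι ℂ) :
    aeval g p = eval g p := by
  rw [← coe_aeval_eq_eval]
  rfl

/-- Product of `X`'s as a monomial. -/
lemma prod_X_eq_monomial' {ι κ : Type*} [DecidableEq ι] (s : Finset κ) (f : κ → ι) :
    (∏ i ∈ s, (X (f i) : MvPolynomial ι ℂ))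
      = monomial (∑ i ∈ s, Finsupp.single (f i) 1) 1 := by
  classical
  induction s using Finset.induction with
  | empty => simp
  | @insert a s hns ih =>
    rw [Finset.prod_insert hns, Finset.sum_insert hns, ih, X, monomial_mul, one_mul]

lemma finsuppProd_sum_single {ι κ : Type*} [DecidableEq ι] (s : Finset κ)
    (f : κ → ι) (g : ι → ℂ) :
    ((∑ i ∈ s, Finsupp.single (f i) 1).prod fun n e => g n ^ e) = ∏ i ∈ s, g (f i) := by
  classical
  induction s using Finset.induction with
  | empty => simp
  | @insert a s hns ih =>
    rw [Finset.sum_insert hns, Finset.prod_insert hns,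
      Finsupp.prod_add_index' (fun a => pow_zero _) (fun a b c => pow_add _ _ _), ih]
    simp [Finsupp.prod_single_index]

/-- Equal fiber counts imply the functions differ by a permutation. -/
lemma exists_perm_of_fiber {d t : ℕ} (x x₀ : Fin t → Fin d)
    (h : ∀ j, (∑ i, if x i = j then 1 else 0 : ℕ) = ∑ i, if x₀ i = j then 1 else 0) :
    ∃ σ : Equiv.Perm (Fin t), x = fun k => x₀ (σ k) := by
  classical
  have hcard : ∀ j, Fintype.card {i // x i = j} = Fintype.card {i // x₀ i = j} := by
    intro j
    rw [Fintype.card_subtype, Fintype.card_subtype, Finset.card_filter, Finset.card_filter]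
    exact h j
  let e : ∀ j, {i // x i = j} ≃ {i // x₀ i = j} := fun j => Fintype.equivOfCardEq (hcard j)
  exact ⟨Equiv.ofFiberEquiv e, funext fun k => (Equiv.ofFiberEquiv_map e k).symm⟩

/-- Exponent of the monomial attached to a pair of multi-indices. -/
def expo {d t : ℕ} (x y : Fin t → Fin d) : (Fin d ⊕ Fin d) →₀ ℕ :=
  (∑ i, Finsupp.single (Sum.inl (x i)) 1) + ∑ i, Finsupp.single (Sum.inr (y i)) 1

lemma expo_perm {d t : ℕ} {x y x₀ y₀ : Fin t → Fin d} (h : expo x y = expo x₀ y₀) :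
    (∃ σ : Equiv.Perm (Fin t), x = fun k => x₀ (σ k)) ∧
    (∃ τ : Equiv.Perm (Fin t), y = fun k => y₀ (τ k)) := by
  classical
  constructor
  · apply exists_perm_of_fiber
    intro j
    have hj := DFunLike.congr_fun h (Sum.inl j)
    simpa [expo, Finsupp.finset_sum_apply, Finsupp.single_apply] using hj
  · apply exists_perm_of_fiber
    intro j
    have hj := DFunLike.congr_fun h (Sum.inr j)
    simpa [expo, Finsupp.finset_sum_apply, Finsupp.single_apply] using hj

lemma permOp_mul {α : Type*} [Fintype α] [DecidableEq α] {t : ℕ} (σ τ : Equiv.Perm (Fin t)) :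
    permOp α σ * permOp α τ = permOp α (σ * τ) := by
  classical
  ext x y
  rw [Matrix.mul_apply]
  simp only [permOp, Matrix.of_apply, ite_mul, one_mul, zero_mul]
  rw [Finset.sum_ite_eq]
  simp [Equiv.Perm.mul_apply]
  congr 1

lemma permOp_mul_symProj {α : Type*} [Fintype α] [DecidableEq α] {t : ℕ}
    (σ : Equiv.Perm (Fin t)) :
    permOp α σ * symProj α t = symProj α t := by
  unfold symProj
  rw [Matrix.mul_smul, Finset.mul_sum]
  congr 1
  calc (∑ τ : Equiv.Perm (Fin t), permOp α σ * permOp α τ)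
      = ∑ τ : Equiv.Perm (Fin t), permOp α (σ * τ) := by
        exact Finset.sum_congr rfl fun τ _ => permOp_mul σ τ
    _ = ∑ τ : Equiv.Perm (Fin t), permOp α τ := Equiv.sum_comp (Equiv.mulLeft σ) _

lemma symProj_mul_permOp {α : Type*} [Fintype α] [DecidableEq α] {t : ℕ}
    (σ : Equiv.Perm (Fin t)) :
    symProj α t * permOp α σ = symProj α t := by
  unfold symProj
  rw [Matrix.smul_mul, Finset.sum_mul]
  congr 1
  calc (∑ τ : Equiv.Perm (Fin t), permOp α τ * permOp α σ)
      = ∑ τ : Equiv.Perm (Fin t), permOp α (τ * σ) := by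
        exact Finset.sum_congr rfl fun τ _ => permOp_mul τ σ
    _ = ∑ τ : Equiv.Perm (Fin t), permOp α τ := Equiv.sum_comp (Equiv.mulRight σ) _

end Aux

/-- **polarization.** If `A` is supported on the symmetric subspace
`Sym_t(ℂ^d)` (i.e. `P_[t]·A·P_[t] = A`) and `tr(A·(|ψ⟩⟨ψ|)^{⊗t}) = 0` for every `ψ ∈ ℂ^d`,
then `A = 0`; hence `A ↦ p_A` is a linear isomorphism between operators on `Sym_t(ℂ^d)`
and polynomials of bi-degree `(t,t)`. -/
theorem stmt19 (d t : ℕ) (hd : 1 ≤ d) (ht : 1 ≤ t)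
    (A : Matrix (Fin t → Fin d) (Fin t → Fin d) ℂ)
    (hsupp : symProj (Fin d) t * A * symProj (Fin d) t = A)
    (hvanish : ∀ ψ : Fin d → ℂ, Matrix.trace (A * tpow (rankOne ψ) t) = 0) :
    A = 0 := by
  classical
  open MvPolynomial in
  -- invariance of A under permutations
  have hl : ∀ σ : Equiv.Perm (Fin t), permOp (Fin d) σ * A = A := by
    intro σ
    conv_lhs => rw [← hsupp]
    rw [← Matrix.mul_assoc, ← Matrix.mul_assoc, permOp_mul_symProj, Matrix.mul_assoc,
      ← Matrix.mul_assoc, hsupp]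
  have hr : ∀ σ : Equiv.Perm (Fin t), A * permOp (Fin d) σ = A := by
    intro σ
    conv_lhs => rw [← hsupp]
    rw [Matrix.mul_assoc, symProj_mul_permOp, hsupp]
  have hinvL : ∀ (σ : Equiv.Perm (Fin t)) (x y : Fin t → Fin d),
      A (fun k => x (σ k)) y = A x y := by
    intro σ x y
    have h2 := congrFun (congrFun (hl σ) x) y
    rw [Matrix.mul_apply] at h2
    simp only [permOp, Matrix.of_apply, ite_mul, one_mul, zero_mul] at h2
    rwa [Finset.sum_ite_eq, if_pos (Finset.mem_univ _)] at h2
  have hinvR : ∀ (τ : Equiv.Perm (Fin t)) (x y : Fin t → Fin d),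
      A x (fun k => y (τ k)) = A x y := by
    intro τ x y
    have h2 := congrFun (congrFun (hr τ⁻¹) x) y
    rw [Matrix.mul_apply] at h2
    simp only [permOp, Matrix.of_apply] at h2
    rw [Finset.sum_eq_single (fun k => y (τ k))] at h2
    · simpa using h2
    · intro z _ hz
      rw [if_neg, mul_zero]
      intro hc
      exact hz (_root_.funext fun k => by
        have := congrFun hc (τ k)
        simpa using this)
    · intro hn
      exact absurd (Finset.mem_univ _) hn
  -- the polynomial
  set Pq : MvPolynomial (Fin d ⊕ Fin d) ℂ :=
    ∑ x : Fin t → Fin d, ∑ y : Fin t → Fin d,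
      MvPolynomial.monomial (expo x y) (A x y) with hPq
  have heval : ∀ g : (Fin d ⊕ Fin d) → ℂ, MvPolynomial.eval g Pq
      = ∑ x : Fin t → Fin d, ∑ y : Fin t → Fin d,
          A x y * ((∏ i, g (Sum.inl (x i))) * ∏ i, g (Sum.inr (y i))) := by
    intro g
    rw [hPq, map_sum]
    refine Finset.sum_congr rfl fun x _ => ?_
    rw [map_sum]
    refine Finset.sum_congr rfl fun y _ => ?_
    rw [eval_monomial, expo,
      Finsupp.prod_add_index' (fun a => pow_zero _) (fun a b c => pow_add _ _ _),
      finsuppProd_sum_single, finsuppProd_sum_single]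
  -- trace formula
  have htr : ∀ ψ : Fin d → ℂ,
      Matrix.trace (A * tpow (rankOne ψ) t)
        = ∑ x : Fin t → Fin d, ∑ y : Fin t → Fin d,
            A x y * ((∏ i, (starRingEnd ℂ) (ψ (x i))) * ∏ i, ψ (y i)) := by
    intro ψ
    rw [Matrix.trace]
    simp only [Matrix.diag, Matrix.mul_apply, tpow, rankOne, Matrix.of_apply]
    refine Finset.sum_congr rfl fun x _ => Finset.sum_congr rfl fun y _ => ?_
    rw [Finset.prod_mul_distrib]
    ring
  -- vanishing at conjugate-diagonal points
  have hv2 : ∀ ψ : Fin d → ℂ,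
      MvPolynomial.eval (Sum.elim (fun j => (starRingEnd ℂ) (ψ j)) ψ) Pq = 0 := by
    intro ψ
    have h3 := hvanish ψ
    rw [htr ψ] at h3
    rw [heval]
    simpa using h3
  -- substitution decoupling the conjugate variables
  set sub : (Fin d ⊕ Fin d) → MvPolynomial (Fin d ⊕ Fin d) ℂ :=
    Sum.elim
      (fun j => MvPolynomial.X (Sum.inl j) - MvPolynomial.C Complex.I * MvPolynomial.X (Sum.inr j))
      (fun j => MvPolynomial.X (Sum.inl j) + MvPolynomial.C Complex.I * MvPolynomial.X (Sum.inr j))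
    with hsub
  have hbind : ∀ g : (Fin d ⊕ Fin d) → ℂ,
      MvPolynomial.eval g (MvPolynomial.bind₁ sub Pq)
        = MvPolynomial.eval (fun i => MvPolynomial.eval g (sub i)) Pq := by
    intro g
    have h1 := MvPolynomial.aeval_bind₁ (S := ℂ) g sub Pq
    simpa only [aeval_eq_eval'] using h1
  have hR0 : MvPolynomial.bind₁ sub Pq = 0 := by
    apply realVanish
    intro v
    rw [hbind]
    have hpt : (fun i => MvPolynomial.eval (fun i => ((v i : ℝ) : ℂ)) (sub i))
        = Sum.elim (fun j => (starRingEnd ℂ) ((v (Sum.inl j) : ℂ) + Complex.I * (v (Sum.inr j) : ℂ)))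
            (fun j => (v (Sum.inl j) : ℂ) + Complex.I * (v (Sum.inr j) : ℂ)) := by
      funext i
      cases i with
      | inl j =>
        simp only [hsub, Sum.elim_inl, map_sub, map_mul, MvPolynomial.eval_X,
          MvPolynomial.eval_C, map_add, Complex.conj_I, Complex.conj_ofReal]
        ring
      | inr j =>
        simp [hsub]
    rw [hpt]
    exact hv2 _
  -- hence the polynomial vanishes everywhere
  have hPzero : ∀ g : (Fin d ⊕ Fin d) → ℂ, MvPolynomial.eval g Pq = 0 := by
    intro g
    have h1 := congrArg (MvPolynomial.eval
      (Sum.elim (fun j => (g (Sum.inl j) + g (Sum.inr j)) / 2)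
        (fun j => (g (Sum.inr j) - g (Sum.inl j)) / (2 * Complex.I)))) hR0
    rw [hbind, map_zero] at h1
    have hpt : (fun i => MvPolynomial.eval
        (Sum.elim (fun j => (g (Sum.inl j) + g (Sum.inr j)) / 2)
          (fun j => (g (Sum.inr j) - g (Sum.inl j)) / (2 * Complex.I))) (sub i)) = g := by
      funext i
      cases i with
      | inl j =>
        simp only [hsub, Sum.elim_inl, map_sub, map_mul, MvPolynomial.eval_X,
          MvPolynomial.eval_C, Sum.elim_inr]
        field_simp
        ring
      | inr j =>
        simp only [hsub, Sum.elim_inr, map_add, map_mul, MvPolynomial.eval_X,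
          MvPolynomial.eval_C, Sum.elim_inl]
        field_simp
        ring
    rwa [hpt] at h1
  have hPq0 : Pq = 0 := MvPolynomial.funext fun g => by rw [hPzero, map_zero]
  -- coefficient extraction
  ext x₀ y₀
  have hc := congrArg (MvPolynomial.coeff (expo x₀ y₀)) hPq0
  rw [hPq] at hc
  rw [MvPolynomial.coeff_sum] at hc
  simp only [MvPolynomial.coeff_sum, MvPolynomial.coeff_monomial, MvPolynomial.coeff_zero] at hc
  have hterm : ∀ x y : Fin t → Fin d,
      (if expo x y = expo x₀ y₀ then A x y else 0)
        = A x₀ y₀ * (if expo x y = expo x₀ y₀ then 1 else 0) := by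
    intro x y
    by_cases hxy : expo x y = expo x₀ y₀
    · rw [if_pos hxy, if_pos hxy, mul_one]
      obtain ⟨⟨σ, hx⟩, ⟨τ, hy⟩⟩ := expo_perm hxy
      rw [hx, hy, hinvL, hinvR]
    · rw [if_neg hxy, if_neg hxy, mul_zero]
  rw [Finset.sum_congr rfl (fun x _ => Finset.sum_congr rfl fun y _ => hterm x y)] at hc
  simp only [← Finset.mul_sum] at hc
  rw [← Fintype.sum_prod_type'] at hc
  rw [Finset.sum_boole] at hc
  have hmem : (x₀, y₀) ∈ Finset.univ.filter
      (fun p : (Fin t → Fin d) × (Fin t → Fin d) => expo p.1 p.2 = expo x₀ y₀) := by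
    simp
  have hne : (((Finset.univ.filter
      (fun p : (Fin t → Fin d) × (Fin t → Fin d) => expo p.1 p.2 = expo x₀ y₀)).card : ℕ) : ℂ)
      ≠ 0 := by
    rw [Nat.cast_ne_zero]
    exact Finset.card_ne_zero_of_mem hmem
  rcases mul_eq_zero.mp hc with h | h
  · simpa using h
  · exact absurd h hne

end
end
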